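/- arXiv:1607.07370 — 2 statements merged into one kernel-verified Lean document; each statement's English description precedes it below -/
import Mathlib

section
/- Let ζ > 0 and T > 0, and let w be a classical zero-input solution of the micro-beam system on [0,1] × [0,T]. Then ∫₀ᵀ ζ (∂³w/∂x³(0,t))² dt = ∫₀ᵀ ∫₀¹ ((∂w/∂t)² + 3 (∂²w/∂x²)² + 5ζ (∂³w/∂x³)²) dx dt + 2 ∫₀¹ [(x−1) (∂w/∂x)(x,T) (∂w/∂t)(x,T) − (x−1) (∂w/∂x)(x,0) (∂w/∂t)(x,0)] dx. -/
set_option maxHeartbeats 2000000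


open Set MeasureTheory intervalIntegral

/-- `wxD w m x t` is the `m`-th spatial derivative of `w` on `[0,1]`. -/
noncomputable def wxD (w : ℝ → ℝ → ℝ) (m : ℕ) (x t : ℝ) : ℝ :=
  iteratedDerivWithin m (fun x' => w x' t) (Icc (0:ℝ) 1) x

/-- `wtD w T k x t` is the `k`-th time derivative of `w` on `[0,T]`. -/
noncomputable def wtD (w : ℝ → ℝ → ℝ) (T : ℝ) (k : ℕ) (x t : ℝ) : ℝ :=
  iteratedDerivWithin k (fun t' => w x t') (Icc (0:ℝ) T) t

/-- A classical zero-input solution of the micro-beam system on `[0,1] × [0,T]`: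
`C⁶` in `x`, `C²` in `t`, jointly continuous with all these partial derivatives,
satisfying the PDE and the boundary conditions. -/
def IsBeamSolution (ζ T : ℝ) (w : ℝ → ℝ → ℝ) : Prop :=
  (∀ t ∈ Icc (0:ℝ) T, ContDiffOn ℝ 6 (fun x => w x t) (Icc (0:ℝ) 1)) ∧
  (∀ x ∈ Icc (0:ℝ) 1, ContDiffOn ℝ 2 (fun t => w x t) (Icc (0:ℝ) T)) ∧
  (∀ m : ℕ, m ≤ 6 →
    ContinuousOn (fun p : ℝ × ℝ => wxD w m p.1 p.2) (Icc (0:ℝ) 1 ×ˢ Icc (0:ℝ) T)) ∧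
  (∀ k : ℕ, k ≤ 2 →
    ContinuousOn (fun p : ℝ × ℝ => wtD w T k p.1 p.2) (Icc (0:ℝ) 1 ×ˢ Icc (0:ℝ) T)) ∧
  (∀ x ∈ Icc (0:ℝ) 1, ∀ t ∈ Icc (0:ℝ) T,
    wxD w 4 x t - ζ * wxD w 6 x t + wtD w T 2 x t = 0) ∧
  (∀ t ∈ Icc (0:ℝ) T,
    w 0 t = 0 ∧ wxD w 1 0 t = 0 ∧ wxD w 2 0 t = 0 ∧
    ζ * wxD w 5 1 t - wxD w 3 1 t = 0 ∧
    wxD w 2 1 t - ζ * wxD w 4 1 t = 0 ∧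
    ζ * wxD w 3 1 t = 0)

/-- Kinetic energy. -/
noncomputable def kinE (w : ℝ → ℝ → ℝ) (T t : ℝ) : ℝ :=
  (1/2) * ∫ x in (0:ℝ)..1, (wtD w T 1 x t)^2

/-- Strain energy. -/
noncomputable def strE (ζ : ℝ) (w : ℝ → ℝ → ℝ) (t : ℝ) : ℝ :=
  (1/2) * ∫ x in (0:ℝ)..1, ((wxD w 2 x t)^2 + ζ * (wxD w 3 x t)^2)

/-- Total energy. -/
noncomputable def totE (ζ : ℝ) (w : ℝ → ℝ → ℝ) (T t : ℝ) : ℝ :=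
  kinE w T t + strE ζ w t


private lemma myftc {a b : ℝ} (hab : a ≤ b) {f f' : ℝ → ℝ}
    (hcont : ContinuousOn f (Icc a b))
    (hderiv : ∀ x ∈ Ioo a b, HasDerivAt f (f' x) x)
    (hint : ContinuousOn f' (Icc a b)) :
    ∫ y in a..b, f' y = f b - f a :=
  integral_eq_sub_of_hasDeriv_right_of_le hab hcont
    (fun x hx => (hderiv x hx).hasDerivWithinAt)
    (hint.intervalIntegrable_of_Icc hab)
private lemma mulbd {a b c d : ℝ} (ha : |a| ≤ c) (hb : |b| ≤ d) (hc : 0 ≤ c) (hd : 0 ≤ d) :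
    |a*b| ≤ c*d := by
  rw [abs_mul]
  exact mul_le_mul ha hb (abs_nonneg _) hc

private lemma abs_add4 (p q r s : ℝ) : |p+q+r+s| ≤ |p|+|q|+|r|+|s| := by
  calc |p+q+r+s| ≤ |p+q+r| + |s| := abs_add_le _ _
    _ ≤ (|p+q| + |r|) + |s| := by linarith [abs_add_le (p+q) r]
    _ ≤ ((|p|+|q|) + |r|) + |s| := by linarith [abs_add_le p q]
    _ = |p|+|q|+|r|+|s| := by ring

private lemma part1 (ζ T : ℝ) (w : ℝ → ℝ → ℝ) (hw : IsBeamSolution ζ T w)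
    (t : ℝ) (ht : t ∈ Icc (0:ℝ) T) :
    ∫ x in (0:ℝ)..1, (2*(x-1)*wxD w 1 x t*wtD w T 2 x t
        + (3*(wxD w 2 x t)^2 + 5*ζ*(wxD w 3 x t)^2)) = ζ*(wxD w 3 0 t)^2 := by
  obtain ⟨hX, hT2, hXc, hTc, hPDE, hBC⟩ := hw
  have hu : UniqueDiffOn ℝ (Icc (0:ℝ) 1) := uniqueDiffOn_Icc one_pos
  have hx6 := hX t ht
  set f : ℕ → ℝ → ℝ := fun m x => wxD w m x t with hf
  have hder : ∀ m : ℕ, m < 6 → ∀ x ∈ Ioo (0:ℝ) 1, HasDerivAt (f m) (f (m+1) x) x := by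
    intro m hm x hx
    have hxI : x ∈ Icc (0:ℝ) 1 := Ioo_subset_Icc_self hx
    have h1 : DifferentiableWithinAt ℝ (f m) (Icc (0:ℝ) 1) x :=
      hx6.differentiableOn_iteratedDerivWithin (by exact_mod_cast hm) hu x hxI
    have h2 : HasDerivWithinAt (f m) (f (m+1) x) (Icc (0:ℝ) 1) x := by
      have h3 := h1.hasDerivWithinAt
      have h4 : f (m+1) x = derivWithin (f m) (Icc (0:ℝ) 1) x := by
        simp only [hf, wxD]
        exact congrFun iteratedDerivWithin_succ x
      rwa [h4]
    exact h2.hasDerivAt (Icc_mem_nhds hx.1 hx.2)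
  have hcont : ∀ m : ℕ, m ≤ 6 → ContinuousOn (f m) (Icc (0:ℝ) 1) :=
    fun m hm => hx6.continuousOn_iteratedDerivWithin (by exact_mod_cast hm) hu
  have hV2x : ContinuousOn (fun x : ℝ => wtD w T 2 x t) (Icc (0:ℝ) 1) := by
    have h := (hTc 2 le_rfl).comp (f := fun x : ℝ => (x, t))
      (Continuous.continuousOn (continuous_id.prodMk continuous_const))
      (fun x hx => ⟨hx, ht⟩)
    simpa [Function.comp_def] using h
  obtain ⟨hb0, hb1, hb2, hb3, hb4, hb5⟩ := hBC t ht
  set P : ℝ → ℝ := fun x => 2*(x-1)*f 1 x*f 3 x - 2*f 1 x*f 2 x - (x-1)*(f 2 x)^2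
      - ζ*(2*(x-1)*f 1 x*f 5 x - 2*f 1 x*f 4 x + 4*f 2 x*f 3 x - 2*(x-1)*f 2 x*f 4 x
            + (x-1)*(f 3 x)^2) with hP
  have hPd : ∀ x ∈ Ioo (0:ℝ) 1,
      HasDerivAt P (-(2*(x-1)*f 1 x*wtD w T 2 x t + (3*(f 2 x)^2 + 5*ζ*(f 3 x)^2))) x := by
    intro x hx
    have h1 := hder 1 (by norm_num) x hx
    have h2 := hder 2 (by norm_num) x hx
    have h3 := hder 3 (by norm_num) x hx
    have h4 := hder 4 (by norm_num) x hx
    have h5 := hder 5 (by norm_num) x hx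
    have e1 : HasDerivAt (fun y : ℝ => y - 1) 1 x := (hasDerivAt_id x).sub_const 1
    have c1 : HasDerivAt (fun y : ℝ => 2*(y-1)) (2*1) x := e1.const_mul 2
    have hbig := ((((c1.mul h1).mul h3).sub ((h1.const_mul 2).mul h2)).sub
        (e1.mul (h2.pow 2))).sub
      (((((((c1.mul h1).mul h5).sub ((h1.const_mul 2).mul h4)).add
        ((h2.const_mul 4).mul h3)).sub ((c1.mul h2).mul h4)).add
        (e1.mul (h3.pow 2))).const_mul ζ)
    have hpde := hPDE x (Ioo_subset_Icc_self hx) t ht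
    have hsub : wtD w T 2 x t = ζ * f 6 x - f 4 x := by
      simp only [hf]; linarith
    refine hbig.congr_deriv ?_
    simp only [Pi.pow_apply, Pi.mul_apply, Nat.cast_ofNat, Nat.reduceSub, pow_one]
    rw [hsub]; ring
  have hPc : ContinuousOn P (Icc (0:ℝ) 1) := by
    have c1 := hcont 1 (by norm_num); have c2 := hcont 2 (by norm_num)
    have c3 := hcont 3 (by norm_num); have c4 := hcont 4 (by norm_num)
    have c5 := hcont 5 (by norm_num)
    fun_prop
  have hP'c : ContinuousOn
      (fun x => -(2*(x-1)*f 1 x*wtD w T 2 x t + (3*(f 2 x)^2 + 5*ζ*(f 3 x)^2)))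
      (Icc (0:ℝ) 1) := by
    have c1 := hcont 1 (by norm_num); have c2 := hcont 2 (by norm_num)
    have c3 := hcont 3 (by norm_num)
    fun_prop
  have hFTC := myftc zero_le_one hPc hPd hP'c
  have hP1 : P 1 = 0 := by
    simp only [hP, hf]
    linear_combination (-2*wxD w 1 1 t) * hb4 + (-4*wxD w 2 1 t) * hb5
  have hP0 : P 0 = ζ * (f 3 0)^2 := by
    have hb1' : f 1 0 = 0 := hb1
    have hb2' : f 2 0 = 0 := hb2
    simp only [hP]
    rw [hb1', hb2']; ring
  calc ∫ x in (0:ℝ)..1, (2*(x-1)*wxD w 1 x t*wtD w T 2 x t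
        + (3*(wxD w 2 x t)^2 + 5*ζ*(wxD w 3 x t)^2))
      = -∫ x in (0:ℝ)..1,
          -(2*(x-1)*f 1 x*wtD w T 2 x t + (3*(f 2 x)^2 + 5*ζ*(f 3 x)^2)) := by
        rw [intervalIntegral.integral_neg, neg_neg]
    _ = -(P 1 - P 0) := by rw [hFTC]
    _ = ζ*(wxD w 3 0 t)^2 := by rw [hP1, hP0]; ring

/-- The time-direction integration-by-parts identity, proved by a
difference-quotient argument (no mixed partial derivatives needed). -/
private lemma part2 {T : ℝ} (hT : 0 < T) (W U V V2 : ℝ → ℝ → ℝ)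
    (hWc : Continuous fun p : ℝ × ℝ => W p.1 p.2)
    (hUc : Continuous fun p : ℝ × ℝ => U p.1 p.2)
    (hVc : Continuous fun p : ℝ × ℝ => V p.1 p.2)
    (hV2c : Continuous fun p : ℝ × ℝ => V2 p.1 p.2)
    (hU : ∀ t ∈ Icc (0:ℝ) T, ∀ x ∈ Ioo (0:ℝ) 1, HasDerivAt (fun y => W y t) (U x t) x)
    (hV : ∀ x ∈ Icc (0:ℝ) 1, ∀ s ∈ Ioo (0:ℝ) T, HasDerivAt (fun s' => W x s') (V x s) s)
    (hV2 : ∀ x ∈ Icc (0:ℝ) 1, ∀ s ∈ Ioo (0:ℝ) T, HasDerivAt (fun s' => V x s') (V2 x s) s)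
    (hBC : ∀ t : ℝ, W 0 t = 0) :
    ∫ t in (0:ℝ)..T, ∫ x in (0:ℝ)..1, 2*(x-1)*U x t*V2 x t
      = (∫ t in (0:ℝ)..T, ∫ x in (0:ℝ)..1, (V x t)^2)
        + ((∫ x in (0:ℝ)..1, 2*(x-1)*U x T*V x T)
            - ∫ x in (0:ℝ)..1, 2*(x-1)*U x 0*V x 0) := by
  -- single-variable continuity helpers
  have hWx : ∀ c : ℝ, Continuous fun x => W x c := by intro c; fun_prop
  have hUx : ∀ c : ℝ, Continuous fun x => U x c := by intro c; fun_prop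
  have hVx : ∀ c : ℝ, Continuous fun x => V x c := by intro c; fun_prop
  have hV2x : ∀ c : ℝ, Continuous fun x => V2 x c := by intro c; fun_prop
  have hWt : ∀ x : ℝ, Continuous fun s => W x s := by intro x; fun_prop
  have hVt : ∀ x : ℝ, Continuous fun s => V x s := by intro x; fun_prop
  have hV2t : ∀ x : ℝ, Continuous fun s => V2 x s := by intro x; fun_prop
  set F : ℝ → ℝ := fun t => ∫ x in (0:ℝ)..1, 2*(x-1)*U x t*V x t with hFdef
  set J : ℝ → ℝ := fun t => ∫ x in (0:ℝ)..1, (2*(x-1)*U x t*V2 x t - (V x t)^2) with hJdef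
  have hFc : Continuous F := by
    apply continuous_parametric_intervalIntegral_of_continuous' (μ := volume)
      (f := fun t x => 2*(x-1)*U x t*V x t)
    show Continuous fun p : ℝ × ℝ => 2*(p.2-1)*U p.2 p.1*V p.2 p.1
    fun_prop
  have hJc : Continuous J := by
    apply continuous_parametric_intervalIntegral_of_continuous' (μ := volume)
      (f := fun t x => 2*(x-1)*U x t*V2 x t - (V x t)^2)
    show Continuous fun p : ℝ × ℝ => 2*(p.2-1)*U p.2 p.1*V2 p.2 p.1 - (V p.2 p.1)^2
    fun_prop
  -- the main claim
  suffices hmain : F T - F 0 = ∫ t in (0:ℝ)..T, J t by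
    have hAc : Continuous fun t => ∫ x in (0:ℝ)..1, 2*(x-1)*U x t*V2 x t := by
      apply continuous_parametric_intervalIntegral_of_continuous' (μ := volume)
        (f := fun t x => 2*(x-1)*U x t*V2 x t)
      show Continuous fun p : ℝ × ℝ => 2*(p.2-1)*U p.2 p.1*V2 p.2 p.1
      fun_prop
    have hBcont : Continuous fun t => ∫ x in (0:ℝ)..1, (V x t)^2 := by
      apply continuous_parametric_intervalIntegral_of_continuous' (μ := volume)
        (f := fun t x => (V x t)^2)
      show Continuous fun p : ℝ × ℝ => (V p.2 p.1)^2
      fun_prop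
    have hJsplit : ∀ t : ℝ, J t = (∫ x in (0:ℝ)..1, 2*(x-1)*U x t*V2 x t)
        - ∫ x in (0:ℝ)..1, (V x t)^2 := by
      intro t
      exact intervalIntegral.integral_sub
        ((by fun_prop : Continuous fun x => 2*(x-1)*U x t*V2 x t).intervalIntegrable _ _)
        ((by fun_prop : Continuous fun x => (V x t)^2).intervalIntegrable _ _)
    have h1 : ∫ t in (0:ℝ)..T, J t
        = (∫ t in (0:ℝ)..T, ∫ x in (0:ℝ)..1, 2*(x-1)*U x t*V2 x t)
          - ∫ t in (0:ℝ)..T, ∫ x in (0:ℝ)..1, (V x t)^2 := by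
      rw [intervalIntegral.integral_congr (g := fun t =>
          (∫ x in (0:ℝ)..1, 2*(x-1)*U x t*V2 x t) - ∫ x in (0:ℝ)..1, (V x t)^2)
          (fun t _ => hJsplit t)]
      exact intervalIntegral.integral_sub (hAc.intervalIntegrable _ _)
        (hBcont.intervalIntegrable _ _)
    rw [h1] at hmain
    simp only [hFdef] at hmain
    linarith
  -- compactness bounds
  have hRcomp : IsCompact (Icc (0:ℝ) 1 ×ˢ Icc (0:ℝ) T) := isCompact_Icc.prod isCompact_Icc
  obtain ⟨MU, hMU⟩ := hRcomp.exists_bound_of_continuousOn hUc.continuousOn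
  obtain ⟨MV, hMV⟩ := hRcomp.exists_bound_of_continuousOn hVc.continuousOn
  obtain ⟨MV2, hMV2⟩ := hRcomp.exists_bound_of_continuousOn hV2c.continuousOn
  set M : ℝ := max 1 (max MU (max MV MV2)) with hMdef
  have hM1 : (1:ℝ) ≤ M := le_max_left _ _
  have hM0 : (0:ℝ) < M := lt_of_lt_of_le one_pos hM1
  have hU_bd : ∀ x ∈ Icc (0:ℝ) 1, ∀ s ∈ Icc (0:ℝ) T, |U x s| ≤ M := by
    intro x hx s hs
    have := hMU (x, s) ⟨hx, hs⟩
    simp only [Real.norm_eq_abs] at this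
    calc |U x s| ≤ MU := this
      _ ≤ M := le_trans (le_max_left _ _) (le_max_right _ _)
  have hV_bd : ∀ x ∈ Icc (0:ℝ) 1, ∀ s ∈ Icc (0:ℝ) T, |V x s| ≤ M := by
    intro x hx s hs
    have := hMV (x, s) ⟨hx, hs⟩
    simp only [Real.norm_eq_abs] at this
    calc |V x s| ≤ MV := this
      _ ≤ M := le_trans (le_trans (le_max_left _ _) (le_max_right _ _)) (le_max_right _ _)
  have hV2_bd : ∀ x ∈ Icc (0:ℝ) 1, ∀ s ∈ Icc (0:ℝ) T, |V2 x s| ≤ M := by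
    intro x hx s hs
    have := hMV2 (x, s) ⟨hx, hs⟩
    simp only [Real.norm_eq_abs] at this
    calc |V2 x s| ≤ MV2 := this
      _ ≤ M := le_trans (le_trans (le_max_right _ _) (le_max_right _ _)) (le_max_right _ _)
  -- ε-approximation step
  have key : ∀ ε > (0:ℝ), |F T - F 0 - ∫ t in (0:ℝ)..T, J t| ≤ (25*M^2*(T+1))*ε := by
    intro ε hε
    -- uniform continuity moduli
    have hucU := Metric.uniformContinuousOn_iff_le.1
      (hRcomp.uniformContinuousOn_of_continuous hUc.continuousOn) ε hε
    have hucV := Metric.uniformContinuousOn_iff_le.1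
      (hRcomp.uniformContinuousOn_of_continuous hVc.continuousOn) ε hε
    have hucV2 := Metric.uniformContinuousOn_iff_le.1
      (hRcomp.uniformContinuousOn_of_continuous hV2c.continuousOn) ε hε
    obtain ⟨δU, hδU, hU'⟩ := hucU
    obtain ⟨δV, hδV, hV'⟩ := hucV
    obtain ⟨δV2, hδV2, hV2'⟩ := hucV2
    set δ : ℝ := min (min δU (min δV δV2)) (min T ε) with hδdef

    have hδ0 : 0 < δ := lt_min (lt_min hδU (lt_min hδV hδV2)) (lt_min hT hε)
    set h : ℝ := δ/2 with hhdef
    have hh0 : 0 < h := by positivity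
    have hhδ : h ≤ δ := by simp only [hhdef]; linarith
    have hδT : δ ≤ T := le_trans (min_le_right _ _) (min_le_left _ _)
    have hδε : δ ≤ ε := le_trans (min_le_right _ _) (min_le_right _ _)
    have hδU' : δ ≤ δU := le_trans (min_le_left _ _) (min_le_left _ _)
    have hδV' : δ ≤ δV := le_trans (min_le_left _ _)
      (le_trans (min_le_right _ _) (min_le_left _ _))
    have hδV2' : δ ≤ δV2 := le_trans (min_le_left _ _)
      (le_trans (min_le_right _ _) (min_le_right _ _))
    have hhT : h < T := by simp only [hhdef]; linarith
    have hhε : h ≤ ε := by simp only [hhdef]; linarith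
    have hTh0 : 0 ≤ T - h := by linarith
    -- uniform-continuity comparisons in the time variable
    have cmpU : ∀ x ∈ Icc (0:ℝ) 1, ∀ s ∈ Icc (0:ℝ) T, ∀ s' ∈ Icc (0:ℝ) T,
        |s - s'| ≤ δ → |U x s - U x s'| ≤ ε := by
      intro x hx s hs s' hs' hd
      have hdist : dist (x, s) ((x, s') : ℝ × ℝ) ≤ δU := by
        rw [Prod.dist_eq]
        simp only [dist_self, Real.dist_eq]
        exact max_le (le_of_lt hδU) (le_trans hd hδU')
      have := hU' (x, s) ⟨hx, hs⟩ (x, s') ⟨hx, hs'⟩ hdist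
      simpa [Real.dist_eq] using this
    have cmpV : ∀ x ∈ Icc (0:ℝ) 1, ∀ s ∈ Icc (0:ℝ) T, ∀ s' ∈ Icc (0:ℝ) T,
        |s - s'| ≤ δ → |V x s - V x s'| ≤ ε := by
      intro x hx s hs s' hs' hd
      have hdist : dist (x, s) ((x, s') : ℝ × ℝ) ≤ δV := by
        rw [Prod.dist_eq]
        simp only [dist_self, Real.dist_eq]
        exact max_le (le_of_lt hδV) (le_trans hd hδV')
      have := hV' (x, s) ⟨hx, hs⟩ (x, s') ⟨hx, hs'⟩ hdist
      simpa [Real.dist_eq] using this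
    have cmpV2 : ∀ x ∈ Icc (0:ℝ) 1, ∀ s ∈ Icc (0:ℝ) T, ∀ s' ∈ Icc (0:ℝ) T,
        |s - s'| ≤ δ → |V2 x s - V2 x s'| ≤ ε := by
      intro x hx s hs s' hs' hd
      have hdist : dist (x, s) ((x, s') : ℝ × ℝ) ≤ δV2 := by
        rw [Prod.dist_eq]
        simp only [dist_self, Real.dist_eq]
        exact max_le (le_of_lt hδV2) (le_trans hd hδV2')
      have := hV2' (x, s) ⟨hx, hs⟩ (x, s') ⟨hx, hs'⟩ hdist
      simpa [Real.dist_eq] using this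
    -- fundamental theorem of calculus in the time variable
    have ftcW : ∀ x ∈ Icc (0:ℝ) 1, ∀ a ∈ Icc (0:ℝ) T, ∀ b ∈ Icc (0:ℝ) T, a ≤ b →
        W x b - W x a = ∫ s in a..b, V x s := by
      intro x hx a ha b hb hab
      refine (myftc hab ((hWt x).continuousOn) (fun s hs => ?_)
        ((hVt x).continuousOn)).symm
      exact hV x hx s ⟨lt_of_le_of_lt ha.1 hs.1, lt_of_lt_of_le hs.2 hb.2⟩
    have ftcV : ∀ x ∈ Icc (0:ℝ) 1, ∀ a ∈ Icc (0:ℝ) T, ∀ b ∈ Icc (0:ℝ) T, a ≤ b →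
        V x b - V x a = ∫ s in a..b, V2 x s := by
      intro x hx a ha b hb hab
      refine (myftc hab ((hVt x).continuousOn) (fun s hs => ?_)
        ((hV2t x).continuousOn)).symm
      exact hV2 x hx s ⟨lt_of_le_of_lt ha.1 hs.1, lt_of_lt_of_le hs.2 hb.2⟩
    -- first order Taylor-type estimates
    have EW : ∀ x ∈ Icc (0:ℝ) 1, ∀ a ∈ Icc (0:ℝ) T, ∀ b ∈ Icc (0:ℝ) T, a ≤ b → b - a ≤ δ →
        |W x b - W x a - (b-a) * V x a| ≤ ε * (b-a) := by
      intro x hx a ha b hb hab hd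
      rw [ftcW x hx a ha b hb hab]
      have hconst : (b-a) * V x a = ∫ s in a..b, V x a := by
        rw [intervalIntegral.integral_const, smul_eq_mul]
      rw [hconst, ← intervalIntegral.integral_sub ((hVt x).intervalIntegrable _ _)
        intervalIntegrable_const]
      have hb1 := intervalIntegral.norm_integral_le_of_norm_le_const
        (C := ε) (f := fun s => V x s - V x a) (a := a) (b := b) ?_
      · rw [Real.norm_eq_abs] at hb1
        rwa [abs_of_nonneg (by linarith : (0:ℝ) ≤ b - a)] at hb1
      · intro s hs
        rw [Set.uIoc_of_le hab] at hs
        have hsI : s ∈ Icc (0:ℝ) T := ⟨le_trans ha.1 (le_of_lt hs.1), le_trans hs.2 hb.2⟩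
        rw [Real.norm_eq_abs]
        refine cmpV x hx s hsI a ha ?_
        rw [abs_of_nonneg (by linarith [hs.1.le] : (0:ℝ) ≤ s - a)]
        linarith [hs.1.le, hs.2]
    have EV : ∀ x ∈ Icc (0:ℝ) 1, ∀ a ∈ Icc (0:ℝ) T, ∀ b ∈ Icc (0:ℝ) T, a ≤ b → b - a ≤ δ →
        |V x b - V x a - (b-a) * V2 x a| ≤ ε * (b-a) := by
      intro x hx a ha b hb hab hd
      rw [ftcV x hx a ha b hb hab]
      have hconst : (b-a) * V2 x a = ∫ s in a..b, V2 x a := by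
        rw [intervalIntegral.integral_const, smul_eq_mul]
      rw [hconst, ← intervalIntegral.integral_sub ((hV2t x).intervalIntegrable _ _)
        intervalIntegrable_const]
      have hb1 := intervalIntegral.norm_integral_le_of_norm_le_const
        (C := ε) (f := fun s => V2 x s - V2 x a) (a := a) (b := b) ?_
      · rw [Real.norm_eq_abs] at hb1
        rwa [abs_of_nonneg (by linarith : (0:ℝ) ≤ b - a)] at hb1
      · intro s hs
        rw [Set.uIoc_of_le hab] at hs
        have hsI : s ∈ Icc (0:ℝ) T := ⟨le_trans ha.1 (le_of_lt hs.1), le_trans hs.2 hb.2⟩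
        rw [Real.norm_eq_abs]
        refine cmpV2 x hx s hsI a ha ?_
        rw [abs_of_nonneg (by linarith [hs.1.le] : (0:ℝ) ≤ s - a)]
        linarith [hs.1.le, hs.2]
    -- crude bounds on increments
    have BW : ∀ x ∈ Icc (0:ℝ) 1, ∀ a ∈ Icc (0:ℝ) T, ∀ b ∈ Icc (0:ℝ) T, a ≤ b →
        |W x b - W x a| ≤ M * (b-a) := by
      intro x hx a ha b hb hab
      rw [ftcW x hx a ha b hb hab]
      have hb1 := intervalIntegral.norm_integral_le_of_norm_le_const
        (C := M) (f := fun s => V x s) (a := a) (b := b) ?_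
      · rw [Real.norm_eq_abs] at hb1
        rwa [abs_of_nonneg (by linarith : (0:ℝ) ≤ b - a)] at hb1
      · intro s hs
        rw [Set.uIoc_of_le hab] at hs
        exact (Real.norm_eq_abs _) ▸ hV_bd x hx s
          ⟨le_trans ha.1 hs.1.le, le_trans hs.2 hb.2⟩
    have BV : ∀ x ∈ Icc (0:ℝ) 1, ∀ a ∈ Icc (0:ℝ) T, ∀ b ∈ Icc (0:ℝ) T, a ≤ b →
        |V x b - V x a| ≤ M * (b-a) := by
      intro x hx a ha b hb hab
      rw [ftcV x hx a ha b hb hab]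
      have hb1 := intervalIntegral.norm_integral_le_of_norm_le_const
        (C := M) (f := fun s => V2 x s) (a := a) (b := b) ?_
      · rw [Real.norm_eq_abs] at hb1
        rwa [abs_of_nonneg (by linarith : (0:ℝ) ≤ b - a)] at hb1
      · intro s hs
        rw [Set.uIoc_of_le hab] at hs
        exact (Real.norm_eq_abs _) ▸ hV2_bd x hx s
          ⟨le_trans ha.1 hs.1.le, le_trans hs.2 hb.2⟩
    -- trapezoid estimate
    have Etrap : ∀ x ∈ Icc (0:ℝ) 1, ∀ t : ℝ, 0 ≤ t → t + h ≤ T →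
        |h*(V x (t+h) + V x t) - 2*(W x (t+h) - W x t)| ≤ 3*ε*h^2 := by
      intro x hx t ht0 hth
      have htI : t ∈ Icc (0:ℝ) T := ⟨ht0, by linarith⟩
      have hthI : t+h ∈ Icc (0:ℝ) T := ⟨by linarith, hth⟩
      have htth : t ≤ t + h := by linarith
      have i1 : ∫ s in t..(t+h), (V x (t+h) + V x t) = h * (V x (t+h) + V x t) := by
        rw [intervalIntegral.integral_const, smul_eq_mul]; ring_nf
      have i2 : ∫ s in t..(t+h), V x s = W x (t+h) - W x t :=
        (ftcW x hx t htI (t+h) hthI htth).symm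
      have i3 : ∫ s in t..(t+h), (2*t+h-2*s)*V2 x t = 0 := by
        rw [intervalIntegral.integral_mul_const]
        have hpoly : ∫ s in t..(t+h), (2*t+h-2*s) = 0 := by
          have hd : ∀ s ∈ Ioo t (t+h),
              HasDerivAt (fun s : ℝ => (2*t+h)*s - s*s) (2*t+h-2*s) s := by
            intro s _
            have h1 : HasDerivAt (fun y : ℝ => (2*t+h)*y - y*y)
                ((2*t+h)*1 - (1*s + s*1)) s :=
              ((hasDerivAt_id s).const_mul (2*t+h)).sub
                ((hasDerivAt_id s).mul (hasDerivAt_id s))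
            convert h1 using 1
            ring
          rw [myftc htth (by fun_prop) hd (by fun_prop)]
          ring
        rw [hpoly, zero_mul]
      have i4 : ∫ s in t..(t+h), (2*V x s) = 2*(W x (t+h) - W x t) := by
        rw [intervalIntegral.integral_const_mul, i2]
      have i5 : ∫ s in t..(t+h), (V x (t+h) + V x t - 2*V x s)
          = h*(V x (t+h) + V x t) - 2*(W x (t+h) - W x t) := by
        rw [intervalIntegral.integral_sub intervalIntegrable_const
          ((by fun_prop : Continuous fun s => 2*V x s).intervalIntegrable _ _), i1, i4]
      have e0 : h*(V x (t+h) + V x t) - 2*(W x (t+h) - W x t)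
          = ∫ s in t..(t+h),
              ((V x (t+h) + V x t - 2*V x s) - (2*t+h-2*s)*V2 x t) := by
        rw [intervalIntegral.integral_sub
          ((by fun_prop : Continuous fun s => V x (t+h) + V x t - 2*V x s).intervalIntegrable _ _)
          ((by fun_prop : Continuous fun s => (2*t+h-2*s)*V2 x t).intervalIntegrable _ _),
          i5, i3]
        ring
      rw [e0]
      have hb1 := intervalIntegral.norm_integral_le_of_norm_le_const
        (C := 3*ε*h)
        (f := fun s => (V x (t+h) + V x t - 2*V x s) - (2*t+h-2*s)*V2 x t)
        (a := t) (b := t+h) ?_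
      · rw [Real.norm_eq_abs] at hb1
        have habs : |t + h - t| = h := by
          rw [abs_of_nonneg (by linarith : (0:ℝ) ≤ t + h - t)]; ring
        rw [habs] at hb1
        nlinarith [hb1]
      · intro s hs
        rw [Set.uIoc_of_le htth] at hs
        have hsI : s ∈ Icc (0:ℝ) T := ⟨le_trans ht0 hs.1.le, le_trans hs.2 hth⟩
        have hst : s - t ≤ δ := by
          have : s - t ≤ h := by linarith [hs.2]
          linarith
        have hths : t + h - s ≤ δ := by
          have : t + h - s ≤ h := by linarith [hs.1.le]
          linarith
        have X1 : |V x (t+h) - V x s - (t+h-s) * V2 x s| ≤ ε * (t+h-s) :=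
          EV x hx s hsI (t+h) hthI (by linarith [hs.2]) hths
        have X2 : |(t+h-s) * (V2 x s - V2 x t)| ≤ h * ε := by
          rw [abs_mul]
          have h1 : |t+h-s| ≤ h := by
            rw [abs_of_nonneg (by linarith [hs.2] : (0:ℝ) ≤ t+h-s)]
            linarith [hs.1.le]
          have h2 : |V2 x s - V2 x t| ≤ ε := cmpV2 x hx s hsI t htI
            (by rw [abs_of_nonneg (by linarith [hs.1.le] : (0:ℝ) ≤ s - t)]; exact hst)
          exact mul_le_mul h1 h2 (abs_nonneg _) (le_of_lt hh0)
        have X3 : |V x s - V x t - (s-t) * V2 x t| ≤ ε * (s-t) :=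
          EV x hx t htI s hsI hs.1.le hst
        have hdecomp : (V x (t+h) + V x t - 2*V x s) - (2*t+h-2*s)*V2 x t
            = (V x (t+h) - V x s - (t+h-s) * V2 x s)
              + (t+h-s) * (V2 x s - V2 x t)
              - (V x s - V x t - (s-t) * V2 x t) := by ring
        rw [Real.norm_eq_abs]
        beta_reduce
        rw [hdecomp]
        have htr := abs_sub (V x (t+h) - V x s - (t+h-s) * V2 x s
            + (t+h-s) * (V2 x s - V2 x t)) (V x s - V x t - (s-t) * V2 x t)
        have htr2 := abs_add_le (V x (t+h) - V x s - (t+h-s) * V2 x s)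
            ((t+h-s) * (V2 x s - V2 x t))
        have hεts : ε * (t+h-s) ≤ ε * h := by
          apply mul_le_mul_of_nonneg_left _ (le_of_lt hε)
          linarith [hs.1.le]
        have hεst : ε * (s-t) ≤ ε * h := by
          apply mul_le_mul_of_nonneg_left _ (le_of_lt hε)
          linarith [hs.2]
        linarith [htr, htr2, X1, X2, X3, hεts, hεst]

    -- the key pointwise-in-time estimate
    have b1 : ∀ t : ℝ, 0 ≤ t → t ≤ T - h → |(F (t+h) - F t) - h * J t| ≤ 11*M*ε*h := by
      intro t ht0 ht1
      have htI : t ∈ Icc (0:ℝ) T := ⟨ht0, by linarith⟩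
      have hthI : t+h ∈ Icc (0:ℝ) T := ⟨by linarith, by linarith⟩
      have htth : t ≤ t + h := by linarith
      set g : ℝ → ℝ := fun x => W x (t+h) - W x t with hgdef
      have hgc : Continuous g := by fun_prop
      have hg0 : g 0 = 0 := by simp only [hgdef, hBC, sub_zero]
      have hgder : ∀ x ∈ Ioo (0:ℝ) 1, HasDerivAt g (U x (t+h) - U x t) x :=
        fun x hx => (hU (t+h) hthI x hx).sub (hU t htI x hx)
      have I3 : ∫ x in (0:ℝ)..1, ((g x)^2 + (x-1)*(2*g x*(U x (t+h) - U x t))) = 0 := by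
        have hd : ∀ x ∈ Ioo (0:ℝ) 1, HasDerivAt (fun y => (y-1)*(g y)^2)
            ((g x)^2 + (x-1)*(2*g x*(U x (t+h) - U x t))) x := by
          intro x hx
          have := ((hasDerivAt_id x).sub_const 1).mul ((hgder x hx).pow 2)
          refine this.congr_deriv ?_
          simp only [Pi.pow_apply, id_eq, Nat.cast_ofNat, Nat.reduceSub, pow_one]
          ring
        rw [myftc zero_le_one (by fun_prop) hd (by fun_prop)]
        rw [hg0]; ring
      set Th : ℝ → ℝ := fun x =>
        h*((x-1)*((U x (t+h)+U x t)*(V x (t+h)-V x t))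
            - 2*h*((x-1)*(U x t*V2 x t)))
          + (x-1)*(U x (t+h)-U x t)*(h*(V x (t+h)+V x t) - 2*g x)
          + (h^2*(V x t)^2 - (g x)^2) with hThdef
      have eq1 : ∫ x in (0:ℝ)..1, Th x = h*(F (t+h) - F t) - h^2 * J t := by
        have hcongr : ∀ x ∈ Set.uIcc (0:ℝ) 1, Th x
            = (h*(2*(x-1)*U x (t+h)*V x (t+h) - 2*(x-1)*U x t*V x t)
                - h^2*(2*(x-1)*U x t*V2 x t - (V x t)^2))
              - ((g x)^2 + (x-1)*(2*g x*(U x (t+h) - U x t))) := by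
          intro x _
          simp only [hThdef]
          ring
        have cA1 : IntervalIntegrable (fun x => 2*(x-1)*U x (t+h)*V x (t+h)) volume 0 1 :=
          (by fun_prop : Continuous fun x => 2*(x-1)*U x (t+h)*V x (t+h)).intervalIntegrable _ _
        have cA2 : IntervalIntegrable (fun x => 2*(x-1)*U x t*V x t) volume 0 1 :=
          (by fun_prop : Continuous fun x => 2*(x-1)*U x t*V x t).intervalIntegrable _ _
        have chA : IntervalIntegrable (fun x =>
            h*(2*(x-1)*U x (t+h)*V x (t+h) - 2*(x-1)*U x t*V x t)) volume 0 1 :=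
          (by fun_prop : Continuous fun x =>
            h*(2*(x-1)*U x (t+h)*V x (t+h) - 2*(x-1)*U x t*V x t)).intervalIntegrable _ _
        have chJ : IntervalIntegrable (fun x =>
            h^2*(2*(x-1)*U x t*V2 x t - (V x t)^2)) volume 0 1 :=
          (by fun_prop : Continuous fun x =>
            h^2*(2*(x-1)*U x t*V2 x t - (V x t)^2)).intervalIntegrable _ _
        have cbig : IntervalIntegrable (fun x =>
            h*(2*(x-1)*U x (t+h)*V x (t+h) - 2*(x-1)*U x t*V x t)
              - h^2*(2*(x-1)*U x t*V2 x t - (V x t)^2)) volume 0 1 :=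
          (by fun_prop : Continuous fun x =>
            h*(2*(x-1)*U x (t+h)*V x (t+h) - 2*(x-1)*U x t*V x t)
              - h^2*(2*(x-1)*U x t*V2 x t - (V x t)^2)).intervalIntegrable _ _
        have cI3 : IntervalIntegrable (fun x =>
            (g x)^2 + (x-1)*(2*g x*(U x (t+h) - U x t))) volume 0 1 :=
          (by fun_prop : Continuous fun x =>
            (g x)^2 + (x-1)*(2*g x*(U x (t+h) - U x t))).intervalIntegrable _ _
        rw [intervalIntegral.integral_congr hcongr,
          intervalIntegral.integral_sub cbig cI3,
          intervalIntegral.integral_sub chA chJ,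
          intervalIntegral.integral_const_mul, intervalIntegral.integral_const_mul,
          I3, intervalIntegral.integral_sub cA1 cA2]
        simp only [hFdef, hJdef]
        ring
      have Thbd : ∀ x ∈ Set.uIoc (0:ℝ) 1, ‖Th x‖ ≤ 11*M*ε*h^2 := by
        intro x hx
        rw [Set.uIoc_of_le zero_le_one] at hx
        have hxI : x ∈ Icc (0:ℝ) 1 := ⟨hx.1.le, hx.2⟩
        have hx1 : |x - 1| ≤ 1 := by
          rw [abs_of_nonpos (by linarith [hx.2] : x - 1 ≤ 0)]
          linarith [hx.1.le]
        have hUdiff : |U x (t+h) - U x t| ≤ ε := cmpU x hxI (t+h) hthI t htI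
          (by rw [abs_of_nonneg (by linarith : (0:ℝ) ≤ t + h - t)]; linarith)
        have hUdiff2 : |U x (t+h) - U x t| ≤ 2*M := by
          have h1 := hU_bd x hxI (t+h) hthI
          have h2 := hU_bd x hxI t htI
          calc |U x (t+h) - U x t| ≤ |U x (t+h)| + |U x t| := abs_sub _ _
            _ ≤ 2*M := by linarith
        have hVdiff : |V x (t+h) - V x t| ≤ M * h := by
          have := BV x hxI t htI (t+h) hthI htth
          simpa using this
        have hVtay : |V x (t+h) - V x t - h * V2 x t| ≤ ε * h := by
          have := EV x hxI t htI (t+h) hthI htth (by linarith)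
          simpa using this
        have hWtay : |g x - h * V x t| ≤ ε * h := by
          have := EW x hxI t htI (t+h) hthI htth (by linarith)
          simpa only [hgdef, add_sub_cancel_left] using this
        have hgbd : |g x| ≤ M * h := by
          have := BW x hxI t htI (t+h) hthI htth
          simpa using this
        have htrap : |h*(V x (t+h) + V x t) - 2*(g x)| ≤ 3*ε*h^2 := by
          have := Etrap x hxI t ht0 (by linarith)
          simpa only [hgdef] using this
        have hUb := hU_bd x hxI t htI
        have hVb := hV_bd x hxI t htI
        have hdecomp : Th x
            = (h*(x-1)) * ((U x (t+h)-U x t)*(V x (t+h)-V x t))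
              + (2*h*(x-1)) * (U x t*(V x (t+h)-V x t-h*V2 x t))
              + ((x-1)*(U x (t+h)-U x t)) * (h*(V x (t+h)+V x t) - 2*g x)
              + (h*V x t - g x) * (h*V x t + g x) := by
          simp only [hThdef]; ring
        have hX : |(h*(x-1)) * ((U x (t+h)-U x t)*(V x (t+h)-V x t))|
            ≤ (h*1) * (ε*(M*h)) :=
          mulbd (mulbd (le_of_eq (abs_of_pos hh0)) hx1 hh0.le zero_le_one)
            (mulbd hUdiff hVdiff hε.le (by positivity)) (by positivity) (by positivity)
        have hY : |(2*h*(x-1)) * (U x t*(V x (t+h)-V x t-h*V2 x t))|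
            ≤ ((2*h)*1) * (M*(ε*h)) :=
          mulbd (mulbd (le_of_eq (abs_of_pos (by linarith))) hx1 (by linarith) zero_le_one)
            (mulbd hUb hVtay hM0.le (by positivity)) (by positivity) (by positivity)
        have hT2 : |((x-1)*(U x (t+h)-U x t)) * (h*(V x (t+h)+V x t) - 2*g x)|
            ≤ (1*(2*M)) * (3*ε*h^2) :=
          mulbd (mulbd hx1 hUdiff2 zero_le_one (by positivity)) htrap
            (by positivity) (by positivity)
        have hT3 : |(h*V x t - g x) * (h*V x t + g x)| ≤ (ε*h) * (h*M + M*h) := by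
          refine mulbd ?_ ?_ (by positivity) (by positivity)
          · rw [abs_sub_comm]; exact hWtay
          · calc |h*V x t + g x| ≤ |h*V x t| + |g x| := abs_add_le _ _
              _ ≤ h*M + M*h := by
                  have : |h*V x t| ≤ h*M :=
                    mulbd (le_of_eq (abs_of_pos hh0)) hVb hh0.le hM0.le
                  linarith [hgbd]
        rw [Real.norm_eq_abs, hdecomp]
        have habs4 := abs_add4 ((h*(x-1)) * ((U x (t+h)-U x t)*(V x (t+h)-V x t)))
          ((2*h*(x-1)) * (U x t*(V x (t+h)-V x t-h*V2 x t)))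
          (((x-1)*(U x (t+h)-U x t)) * (h*(V x (t+h)+V x t) - 2*g x))
          ((h*V x t - g x) * (h*V x t + g x))
        have hsum : (h*1) * (ε*(M*h)) + ((2*h)*1) * (M*(ε*h)) + (1*(2*M)) * (3*ε*h^2)
            + (ε*h) * (h*M + M*h) = 11*M*ε*h^2 := by ring
        linarith [habs4, hX, hY, hT2, hT3, hsum]
      have hintbd := intervalIntegral.norm_integral_le_of_norm_le_const Thbd
      rw [eq1, Real.norm_eq_abs] at hintbd
      have hfin : |h*(F (t+h) - F t) - h^2*J t| ≤ 11*M*ε*h^2 := by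
        have habs : |(1:ℝ) - 0| = 1 := by norm_num
        rw [habs, mul_one] at hintbd
        exact hintbd
      have hfact : h*(F (t+h) - F t) - h^2*J t = h*((F (t+h) - F t) - h*J t) := by ring
      rw [hfact, abs_mul, abs_of_pos hh0] at hfin
      have h3 : |(F (t+h) - F t) - h*J t| * h ≤ (11*M*ε*h) * h := by nlinarith [hfin]
      exact le_of_mul_le_mul_right h3 hh0
    -- Step A : relating the difference quotient integral to F T - F 0
    have hFi : ∀ a b : ℝ, IntervalIntegrable F volume a b :=
      fun a b => hFc.intervalIntegrable a b
    have hFsh : Continuous fun t => F (t+h) := hFc.comp (continuous_add_right h)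
    have e1 : ∫ t in (0:ℝ)..(T-h), F (t+h) = ∫ t in h..T, F t := by
      have := intervalIntegral.integral_comp_add_right (a := 0) (b := T-h) (f := F) h
      simpa using this
    have e2 : ∫ t in (0:ℝ)..(T-h), (F (t+h) - F t)
        = (∫ t in (T-h)..T, F t) - ∫ t in (0:ℝ)..h, F t := by
      rw [intervalIntegral.integral_sub (hFsh.intervalIntegrable _ _) (hFi _ _), e1]
      have h1 := integral_add_adjacent_intervals (hFi h (T-h)) (hFi (T-h) T)
      have h2 := integral_add_adjacent_intervals (hFi 0 h) (hFi h (T-h))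
      linarith
    have Fdiff : ∀ c ∈ Icc (0:ℝ) T, ∀ t ∈ Icc (0:ℝ) T, |t - c| ≤ δ → |F t - F c| ≤ 4*M*ε := by
      intro c hc t ht hd
      have hsub : F t - F c = ∫ x in (0:ℝ)..1, (2*(x-1)*U x t*V x t - 2*(x-1)*U x c*V x c) := by
        simp only [hFdef]
        rw [intervalIntegral.integral_sub
          ((by fun_prop : Continuous fun x => 2*(x-1)*U x t*V x t).intervalIntegrable _ _)
          ((by fun_prop : Continuous fun x => 2*(x-1)*U x c*V x c).intervalIntegrable _ _)]
      rw [hsub]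
      have hb1 := intervalIntegral.norm_integral_le_of_norm_le_const (C := 4*M*ε)
        (f := fun x => 2*(x-1)*U x t*V x t - 2*(x-1)*U x c*V x c) (a := 0) (b := 1) ?_
      · rw [Real.norm_eq_abs] at hb1
        have habs : |(1:ℝ)-0| = 1 := by norm_num
        rw [habs, mul_one] at hb1
        exact hb1
      · intro x hx
        rw [Set.uIoc_of_le zero_le_one] at hx
        have hxI : x ∈ Icc (0:ℝ) 1 := ⟨hx.1.le, hx.2⟩
        have hx1 : |x - 1| ≤ 1 := by
          rw [abs_of_nonpos (by linarith [hx.2] : x - 1 ≤ 0)]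
          linarith [hx.1.le]
        have hUd : |U x t - U x c| ≤ ε := cmpU x hxI t ht c hc hd
        have hVd : |V x t - V x c| ≤ ε := cmpV x hxI t ht c hc hd
        have hUb := hU_bd x hxI t ht
        have hVb := hV_bd x hxI c hc
        have hdec : 2*(x-1)*U x t*V x t - 2*(x-1)*U x c*V x c
            = (2*(x-1)) * (U x t * (V x t - V x c)) + (2*(x-1)) * ((U x t - U x c) * V x c) := by
          ring
        rw [Real.norm_eq_abs]
        beta_reduce
        rw [hdec]
        have hA : |(2*(x-1)) * (U x t * (V x t - V x c))| ≤ (2*1) * (M*ε) :=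
          mulbd (mulbd (le_of_eq (abs_of_pos two_pos)) hx1 zero_le_two zero_le_one)
            (mulbd hUb hVd hM0.le hε.le) (by positivity) (by positivity)
        have hB : |(2*(x-1)) * ((U x t - U x c) * V x c)| ≤ (2*1) * (ε*M) :=
          mulbd (mulbd (le_of_eq (abs_of_pos two_pos)) hx1 zero_le_two zero_le_one)
            (mulbd hUd hVb hε.le (by positivity)) (by positivity) (by positivity)
        calc |_| ≤ |(2*(x-1)) * (U x t * (V x t - V x c))|
              + |(2*(x-1)) * ((U x t - U x c) * V x c)| := abs_add_le _ _
          _ ≤ 4*M*ε := by nlinarith [hA, hB]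
    have endT : |(∫ t in (T-h)..T, F t) - h * F T| ≤ 4*M*ε*h := by
      have hc : ∫ t in (T-h)..T, (F T) = h * F T := by
        rw [intervalIntegral.integral_const, smul_eq_mul]; ring_nf
      rw [← hc, ← intervalIntegral.integral_sub (hFi _ _) intervalIntegrable_const]
      have hb1 := intervalIntegral.norm_integral_le_of_norm_le_const (C := 4*M*ε)
        (f := fun t => F t - F T) (a := T-h) (b := T) ?_
      · rw [Real.norm_eq_abs] at hb1
        have habs : |T-(T-h)| = h := by
          rw [abs_of_nonneg (by linarith : (0:ℝ) ≤ T-(T-h))]; ring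
        rw [habs] at hb1
        exact hb1
      · intro s hs
        rw [Set.uIoc_of_le (by linarith : T-h ≤ T)] at hs
        have hsI : s ∈ Icc (0:ℝ) T := ⟨by linarith [hs.1], hs.2⟩
        rw [Real.norm_eq_abs]
        refine Fdiff T ⟨hT.le, le_refl T⟩ s hsI ?_
        rw [abs_of_nonpos (by linarith [hs.2] : s - T ≤ 0)]
        linarith [hs.1]
    have end0 : |(∫ t in (0:ℝ)..h, F t) - h * F 0| ≤ 4*M*ε*h := by
      have hc : ∫ t in (0:ℝ)..h, (F 0) = h * F 0 := by
        rw [intervalIntegral.integral_const, smul_eq_mul]; ring_nf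
      rw [← hc, ← intervalIntegral.integral_sub (hFi _ _) intervalIntegrable_const]
      have hb1 := intervalIntegral.norm_integral_le_of_norm_le_const (C := 4*M*ε)
        (f := fun t => F t - F 0) (a := 0) (b := h) ?_
      · rw [Real.norm_eq_abs] at hb1
        have habs : |h-(0:ℝ)| = h := by
          rw [abs_of_nonneg (by linarith : (0:ℝ) ≤ h-0)]; ring
        rw [habs] at hb1
        exact hb1
      · intro s hs
        rw [Set.uIoc_of_le hh0.le] at hs
        have hsI : s ∈ Icc (0:ℝ) T := ⟨hs.1.le, by linarith [hs.2]⟩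
        rw [Real.norm_eq_abs]
        refine Fdiff 0 ⟨le_refl (0:ℝ), hT.le⟩ s hsI ?_
        rw [abs_of_nonneg (by linarith [hs.1.le] : (0:ℝ) ≤ s - 0)]
        linarith [hs.2]
    have stepA : |(F T - F 0) - (1/h) * ∫ t in (0:ℝ)..(T-h), (F (t+h) - F t)| ≤ 8*M*ε := by
      rw [e2]
      have hrw : (F T - F 0) - (1/h) * ((∫ t in (T-h)..T, F t) - ∫ t in (0:ℝ)..h, F t)
          = -(1/h) * (((∫ t in (T-h)..T, F t) - h * F T) - ((∫ t in (0:ℝ)..h, F t) - h * F 0)) := by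
        field_simp
        ring
      rw [hrw, abs_mul, abs_neg, abs_of_pos (by positivity : (0:ℝ) < 1/h)]
      have htri : |((∫ t in (T-h)..T, F t) - h * F T) - ((∫ t in (0:ℝ)..h, F t) - h * F 0)|
          ≤ 8*M*ε*h := by
        calc |_| ≤ |(∫ t in (T-h)..T, F t) - h * F T| + |(∫ t in (0:ℝ)..h, F t) - h * F 0| :=
              abs_sub _ _
          _ ≤ 8*M*ε*h := by linarith [endT, end0]
      calc (1/h) * |((∫ t in (T-h)..T, F t) - h * F T) - ((∫ t in (0:ℝ)..h, F t) - h * F 0)|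
          ≤ (1/h) * (8*M*ε*h) := by
            apply mul_le_mul_of_nonneg_left htri (by positivity)
        _ = 8*M*ε := by field_simp
    -- Step B : comparing the difference quotient integral with the J-integral
    have hJi : ∀ a b : ℝ, IntervalIntegrable J volume a b :=
      fun a b => hJc.intervalIntegrable a b
    have Jbd : ∀ t ∈ Icc (0:ℝ) T, |J t| ≤ 3*M^2 := by
      intro t ht
      have hb1 := intervalIntegral.norm_integral_le_of_norm_le_const (C := 3*M^2)
        (f := fun x => 2*(x-1)*U x t*V2 x t - (V x t)^2) (a := 0) (b := 1) ?_
      · rw [Real.norm_eq_abs] at hb1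
        have habs : |(1:ℝ)-0| = 1 := by norm_num
        rw [habs, mul_one] at hb1
        exact hb1
      · intro x hx
        rw [Set.uIoc_of_le zero_le_one] at hx
        have hxI : x ∈ Icc (0:ℝ) 1 := ⟨hx.1.le, hx.2⟩
        have hx1 : |x - 1| ≤ 1 := by
          rw [abs_of_nonpos (by linarith [hx.2] : x - 1 ≤ 0)]
          linarith [hx.1.le]
        have hUb := hU_bd x hxI t ht
        have hVb := hV_bd x hxI t ht
        have hV2b := hV2_bd x hxI t ht
        rw [Real.norm_eq_abs]
        have hA : |2*(x-1)*U x t*V2 x t| ≤ ((2*1)*M)*M := by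
          have : 2*(x-1)*U x t*V2 x t = ((2*(x-1))*U x t)*V2 x t := by ring
          rw [this]
          exact mulbd (mulbd (mulbd (le_of_eq (abs_of_pos two_pos)) hx1 zero_le_two
            zero_le_one) hUb (by positivity) hM0.le) hV2b (by positivity) hM0.le
        have hB : |(V x t)^2| ≤ M*M := by
          rw [sq, abs_mul]
          exact mul_le_mul (hVb) (hVb) (abs_nonneg _) hM0.le
        calc |2*(x-1)*U x t*V2 x t - (V x t)^2|
            ≤ |2*(x-1)*U x t*V2 x t| + |(V x t)^2| := abs_sub _ _
          _ ≤ 3*M^2 := by nlinarith [hA, hB]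
    have b2 : |(∫ t in (0:ℝ)..T, J t) - ∫ t in (0:ℝ)..(T-h), J t| ≤ 3*M^2*ε := by
      have hadj := integral_add_adjacent_intervals (hJi 0 (T-h)) (hJi (T-h) T)
      have hrw : (∫ t in (0:ℝ)..T, J t) - ∫ t in (0:ℝ)..(T-h), J t
          = ∫ t in (T-h)..T, J t := by linarith
      rw [hrw]
      have hb1 := intervalIntegral.norm_integral_le_of_norm_le_const (C := 3*M^2)
        (f := J) (a := T-h) (b := T) ?_
      · rw [Real.norm_eq_abs] at hb1
        have habs : |T-(T-h)| = h := by
          rw [abs_of_nonneg (by linarith : (0:ℝ) ≤ T-(T-h))]; ring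
        rw [habs] at hb1
        nlinarith [hb1, hM0, hhε]
      · intro s hs
        rw [Set.uIoc_of_le (by linarith : T-h ≤ T)] at hs
        rw [Real.norm_eq_abs]
        exact Jbd s ⟨by linarith [hs.1], hs.2⟩
    have stepB1 : |(∫ t in (0:ℝ)..(T-h), (F (t+h) - F t)) - h * ∫ t in (0:ℝ)..(T-h), J t|
        ≤ 11*M*ε*h*T := by
      have hhJ : ∫ t in (0:ℝ)..(T-h), h * J t = h * ∫ t in (0:ℝ)..(T-h), J t :=
        intervalIntegral.integral_const_mul _ _
      rw [← hhJ, ← intervalIntegral.integral_sub (f := fun t => F (t+h) - F t)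
        ((hFsh.sub hFc).intervalIntegrable _ _)
        ((by fun_prop : Continuous fun t => h * J t).intervalIntegrable _ _)]
      have hb1 := intervalIntegral.norm_integral_le_of_norm_le_const (C := 11*M*ε*h)
        (f := fun t => (F (t+h) - F t) - h * J t) (a := 0) (b := T-h) ?_
      · rw [Real.norm_eq_abs] at hb1
        have habs : |T-h-(0:ℝ)| = T-h := by
          rw [abs_of_nonneg (by linarith : (0:ℝ) ≤ T-h-0)]; ring
        rw [habs] at hb1
        have hnn : (0:ℝ) ≤ 11*M*ε*h := by positivity
        nlinarith [hb1, hnn, hh0.le]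
      · intro s hs
        rw [Set.uIoc_of_le (by linarith : (0:ℝ) ≤ T-h)] at hs
        rw [Real.norm_eq_abs]
        exact b1 s hs.1.le hs.2
    have stepB : |(1/h) * (∫ t in (0:ℝ)..(T-h), (F (t+h) - F t)) - ∫ t in (0:ℝ)..T, J t|
        ≤ 11*M*ε*T + 3*M^2*ε := by
      have hr1 : |(1/h) * (∫ t in (0:ℝ)..(T-h), (F (t+h) - F t)) - ∫ t in (0:ℝ)..(T-h), J t|
          ≤ 11*M*ε*T := by
        have hrw : (1/h) * (∫ t in (0:ℝ)..(T-h), (F (t+h) - F t)) - ∫ t in (0:ℝ)..(T-h), J t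
            = (1/h) * ((∫ t in (0:ℝ)..(T-h), (F (t+h) - F t)) - h * ∫ t in (0:ℝ)..(T-h), J t) := by
          field_simp
        rw [hrw, abs_mul, abs_of_pos (by positivity : (0:ℝ) < 1/h)]
        calc (1/h) * |(∫ t in (0:ℝ)..(T-h), (F (t+h) - F t)) - h * ∫ t in (0:ℝ)..(T-h), J t|
            ≤ (1/h) * (11*M*ε*h*T) := by
              apply mul_le_mul_of_nonneg_left stepB1 (by positivity)
          _ = 11*M*ε*T := by field_simp
      calc |(1/h) * (∫ t in (0:ℝ)..(T-h), (F (t+h) - F t)) - ∫ t in (0:ℝ)..T, J t|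
          ≤ |(1/h) * (∫ t in (0:ℝ)..(T-h), (F (t+h) - F t)) - ∫ t in (0:ℝ)..(T-h), J t|
            + |(∫ t in (0:ℝ)..(T-h), J t) - ∫ t in (0:ℝ)..T, J t| := by
            have := abs_add_le ((1/h) * (∫ t in (0:ℝ)..(T-h), (F (t+h) - F t))
              - ∫ t in (0:ℝ)..(T-h), J t)
              ((∫ t in (0:ℝ)..(T-h), J t) - ∫ t in (0:ℝ)..T, J t)
            simpa using this
        _ ≤ 11*M*ε*T + 3*M^2*ε := by
            rw [abs_sub_comm (∫ t in (0:ℝ)..(T-h), J t)]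
            linarith [hr1, b2]
    -- combine
    calc |F T - F 0 - ∫ t in (0:ℝ)..T, J t|
        ≤ |(F T - F 0) - (1/h) * ∫ t in (0:ℝ)..(T-h), (F (t+h) - F t)|
          + |(1/h) * (∫ t in (0:ℝ)..(T-h), (F (t+h) - F t)) - ∫ t in (0:ℝ)..T, J t| := by
          have := abs_add_le ((F T - F 0) - (1/h) * ∫ t in (0:ℝ)..(T-h), (F (t+h) - F t))
            ((1/h) * (∫ t in (0:ℝ)..(T-h), (F (t+h) - F t)) - ∫ t in (0:ℝ)..T, J t)
          simpa using this
      _ ≤ 8*M*ε + (11*M*ε*T + 3*M^2*ε) := by linarith [stepA, stepB]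
      _ ≤ 25*M^2*(T+1)*ε := by
          have k1 : (0:ℝ) ≤ (M-1)*M*ε :=
            mul_nonneg (mul_nonneg (by linarith) hM0.le) hε.le
          have k2 : (0:ℝ) ≤ (M-1)*M*ε*T := mul_nonneg k1 hT.le
          have k3 : (0:ℝ) ≤ M^2*ε := by positivity
          have k4 : (0:ℝ) ≤ M^2*ε*T := by positivity
          nlinarith [k1, k2, k3, k4]
  -- conclude equality from the ε-estimates
  by_contra hne
  have hX : F T - F 0 - (∫ t in (0:ℝ)..T, J t) ≠ 0 := sub_ne_zero.mpr hne
  have hXpos : 0 < |F T - F 0 - ∫ t in (0:ℝ)..T, J t| := abs_pos.mpr hX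
  have hCpos : (0:ℝ) < 25*M^2*(T+1) := by positivity
  have hk := key ((|F T - F 0 - ∫ t in (0:ℝ)..T, J t|)/(2*(25*M^2*(T+1)))) (by positivity)
  have heq : 25*M^2*(T+1)*((|F T - F 0 - ∫ t in (0:ℝ)..T, J t|)/(2*(25*M^2*(T+1))))
      = (|F T - F 0 - ∫ t in (0:ℝ)..T, J t|)/2 := by
    field_simp
  rw [heq] at hk
  linarith


/-- The multiplier identity for classical zero-input solutions of the
micro-beam system. -/
theorem stmt_15 (ζ T : ℝ) (hζ : 0 < ζ) (hT : 0 < T)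
    (w : ℝ → ℝ → ℝ) (hw : IsBeamSolution ζ T w) :
    ∫ t in (0:ℝ)..T, ζ * (wxD w 3 0 t)^2
      = (∫ t in (0:ℝ)..T, ∫ x in (0:ℝ)..1,
          ((wtD w T 1 x t)^2 + 3 * (wxD w 2 x t)^2 + 5 * ζ * (wxD w 3 x t)^2))
        + 2 * ∫ x in (0:ℝ)..1,
            ((x - 1) * wxD w 1 x T * wtD w T 1 x T
              - (x - 1) * wxD w 1 x 0 * wtD w T 1 x 0) := by
  have hw' := hw
  obtain ⟨hX, hT2c, hXc, hTc, hPDE, hBC⟩ := hw'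
  have hT0 : (0:ℝ) ≤ T := hT.le
  have h01 : UniqueDiffOn ℝ (Icc (0:ℝ) 1) := uniqueDiffOn_Icc one_pos
  have h0T : UniqueDiffOn ℝ (Icc (0:ℝ) T) := uniqueDiffOn_Icc hT
  -- clamping maps
  set π1 : ℝ → ℝ := fun x => max 0 (min 1 x) with hπ1
  set π2 : ℝ → ℝ := fun s => max 0 (min T s) with hπ2
  have hπ1c : Continuous π1 := continuous_const.max (continuous_const.min continuous_id)
  have hπ2c : Continuous π2 := continuous_const.max (continuous_const.min continuous_id)
  have hπ1mem : ∀ x, π1 x ∈ Icc (0:ℝ) 1 :=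
    fun x => ⟨le_max_left _ _, max_le zero_le_one (min_le_left _ _)⟩
  have hπ2mem : ∀ s, π2 s ∈ Icc (0:ℝ) T :=
    fun s => ⟨le_max_left _ _, max_le hT0 (min_le_left _ _)⟩
  have hπ1id : ∀ x ∈ Icc (0:ℝ) 1, π1 x = x := by
    intro x hx; simp only [hπ1]; rw [min_eq_right hx.2, max_eq_right hx.1]
  have hπ2id : ∀ s ∈ Icc (0:ℝ) T, π2 s = s := by
    intro s hs; simp only [hπ2]; rw [min_eq_right hs.2, max_eq_right hs.1]
  -- clamped (hence globally continuous) versions of the various derivatives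
  set Wc : ℝ → ℝ → ℝ := fun x s => w (π1 x) (π2 s) with hWcdef
  set Uc : ℝ → ℝ → ℝ := fun x s => wxD w 1 (π1 x) (π2 s) with hUcdef
  set X2 : ℝ → ℝ → ℝ := fun x s => wxD w 2 (π1 x) (π2 s) with hX2def
  set X3 : ℝ → ℝ → ℝ := fun x s => wxD w 3 (π1 x) (π2 s) with hX3def
  set Vc : ℝ → ℝ → ℝ := fun x s => wtD w T 1 (π1 x) (π2 s) with hVcdef
  set V2c : ℝ → ℝ → ℝ := fun x s => wtD w T 2 (π1 x) (π2 s) with hV2cdef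
  have hclamp : Continuous fun p : ℝ × ℝ => (π1 p.1, π2 p.2) :=
    (hπ1c.comp continuous_fst).prodMk (hπ2c.comp continuous_snd)
  have hmemR : ∀ p : ℝ × ℝ, (π1 p.1, π2 p.2) ∈ Icc (0:ℝ) 1 ×ˢ Icc (0:ℝ) T :=
    fun p => ⟨hπ1mem _, hπ2mem _⟩
  have hWcont : Continuous fun p : ℝ × ℝ => Wc p.1 p.2 := by
    have h0 : ContinuousOn (fun p : ℝ × ℝ => w p.1 p.2) (Icc (0:ℝ) 1 ×ˢ Icc (0:ℝ) T) := by
      have := hXc 0 (by norm_num)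
      simpa only [wxD, iteratedDerivWithin_zero] using this
    have := h0.comp_continuous hclamp hmemR
    simpa [Function.comp_def] using this
  have hUcont : Continuous fun p : ℝ × ℝ => Uc p.1 p.2 := by
    have := (hXc 1 (by norm_num)).comp_continuous hclamp hmemR
    simpa [Function.comp_def] using this
  have hX2cont : Continuous fun p : ℝ × ℝ => X2 p.1 p.2 := by
    have := (hXc 2 (by norm_num)).comp_continuous hclamp hmemR
    simpa [Function.comp_def] using this
  have hX3cont : Continuous fun p : ℝ × ℝ => X3 p.1 p.2 := by
    have := (hXc 3 (by norm_num)).comp_continuous hclamp hmemR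
    simpa [Function.comp_def] using this
  have hVcont : Continuous fun p : ℝ × ℝ => Vc p.1 p.2 := by
    have := (hTc 1 (by norm_num)).comp_continuous hclamp hmemR
    simpa [Function.comp_def] using this
  have hV2cont : Continuous fun p : ℝ × ℝ => V2c p.1 p.2 := by
    have := (hTc 2 (by norm_num)).comp_continuous hclamp hmemR
    simpa [Function.comp_def] using this
  -- raw derivative facts
  have hwx1 : ∀ t ∈ Icc (0:ℝ) T, ∀ x ∈ Ioo (0:ℝ) 1,
      HasDerivAt (fun y => w y t) (wxD w 1 x t) x := by
    intro t ht x hx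
    have hxI : x ∈ Icc (0:ℝ) 1 := Ioo_subset_Icc_self hx
    have hdw : DifferentiableWithinAt ℝ (fun y => w y t) (Icc (0:ℝ) 1) x :=
      ((hX t ht).differentiableOn (by norm_num)) x hxI
    have h2 := hdw.hasDerivWithinAt
    have h3 : wxD w 1 x t = derivWithin (fun y => w y t) (Icc (0:ℝ) 1) x := by
      simp only [wxD]
      exact congrFun iteratedDerivWithin_one x
    rw [h3]
    exact h2.hasDerivAt (Icc_mem_nhds hx.1 hx.2)
  have hwtder : ∀ x ∈ Icc (0:ℝ) 1, ∀ k : ℕ, k < 2 → ∀ s ∈ Ioo (0:ℝ) T,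
      HasDerivAt (fun r => wtD w T k x r) (wtD w T (k+1) x s) s := by
    intro x hx k hk s hs
    have hsI : s ∈ Icc (0:ℝ) T := Ioo_subset_Icc_self hs
    have h1 : DifferentiableWithinAt ℝ
        (iteratedDerivWithin k (fun r => w x r) (Icc (0:ℝ) T)) (Icc (0:ℝ) T) s :=
      (hT2c x hx).differentiableOn_iteratedDerivWithin (by exact_mod_cast hk) h0T s hsI
    have h2 := h1.hasDerivWithinAt
    have h3 : wtD w T (k+1) x s
        = derivWithin (iteratedDerivWithin k (fun r => w x r) (Icc (0:ℝ) T)) (Icc (0:ℝ) T) s := by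
      simp only [wtD]
      exact congrFun iteratedDerivWithin_succ s
    have h4 : HasDerivAt (iteratedDerivWithin k (fun r => w x r) (Icc (0:ℝ) T))
        (wtD w T (k+1) x s) s := by
      rw [h3]
      exact h2.hasDerivAt (Icc_mem_nhds hs.1 hs.2)
    exact h4
  have hwt1 : ∀ x ∈ Icc (0:ℝ) 1, ∀ s ∈ Ioo (0:ℝ) T,
      HasDerivAt (fun r => w x r) (wtD w T 1 x s) s := by
    intro x hx s hs
    have h1 := hwtder x hx 0 (by norm_num) s hs
    have h2 : (fun r => wtD w T 0 x r) = fun r => w x r := by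
      funext r
      simp [wtD]
    rwa [h2] at h1
  -- derivative facts for the clamped functions
  have hUder : ∀ s ∈ Icc (0:ℝ) T, ∀ x ∈ Ioo (0:ℝ) 1, HasDerivAt (fun y => Wc y s) (Uc x s) x := by
    intro s hs x hx
    have hxI : x ∈ Icc (0:ℝ) 1 := Ioo_subset_Icc_self hx
    have hbase := hwx1 s hs x hx
    have hee : (fun y => Wc y s) =ᶠ[nhds x] (fun y => w y s) := by
      filter_upwards [Ioo_mem_nhds hx.1 hx.2] with y hy
      simp only [hWcdef]
      rw [hπ1id y (Ioo_subset_Icc_self hy), hπ2id s hs]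
    have hres := hbase.congr_of_eventuallyEq hee
    have hval : Uc x s = wxD w 1 x s := by
      simp only [hUcdef]; rw [hπ1id x hxI, hπ2id s hs]
    rwa [hval]
  have hVder : ∀ x ∈ Icc (0:ℝ) 1, ∀ s ∈ Ioo (0:ℝ) T, HasDerivAt (fun r => Wc x r) (Vc x s) s := by
    intro x hx s hs
    have hsI : s ∈ Icc (0:ℝ) T := Ioo_subset_Icc_self hs
    have hbase := hwt1 x hx s hs
    have hee : (fun r => Wc x r) =ᶠ[nhds s] (fun r => w x r) := by
      filter_upwards [Ioo_mem_nhds hs.1 hs.2] with r hr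
      simp only [hWcdef]
      rw [hπ1id x hx, hπ2id r (Ioo_subset_Icc_self hr)]
    have hres := hbase.congr_of_eventuallyEq hee
    have hval : Vc x s = wtD w T 1 x s := by
      simp only [hVcdef]; rw [hπ1id x hx, hπ2id s hsI]
    rwa [hval]
  have hV2der : ∀ x ∈ Icc (0:ℝ) 1, ∀ s ∈ Ioo (0:ℝ) T, HasDerivAt (fun r => Vc x r) (V2c x s) s := by
    intro x hx s hs
    have hsI : s ∈ Icc (0:ℝ) T := Ioo_subset_Icc_self hs
    have hbase := hwtder x hx 1 (by norm_num) s hs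
    have hee : (fun r => Vc x r) =ᶠ[nhds s] (fun r => wtD w T 1 x r) := by
      filter_upwards [Ioo_mem_nhds hs.1 hs.2] with r hr
      simp only [hVcdef]
      rw [hπ1id x hx, hπ2id r (Ioo_subset_Icc_self hr)]
    have hres := hbase.congr_of_eventuallyEq hee
    have hval : V2c x s = wtD w T 2 x s := by
      simp only [hV2cdef]; rw [hπ1id x hx, hπ2id s hsI]
    rwa [hval]
  have hBCc : ∀ s : ℝ, Wc 0 s = 0 := by
    intro s
    simp only [hWcdef]
    rw [hπ1id 0 ⟨le_refl (0:ℝ), zero_le_one⟩]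
    exact (hBC (π2 s) (hπ2mem s)).1
  -- the time-direction identity
  have P2 := part2 hT Wc Uc Vc V2c hWcont hUcont hVcont hV2cont hUder hVder hV2der hBCc
  -- part 1, rewritten pointwise
  have P1 : ∀ t ∈ Set.uIcc (0:ℝ) T, ζ * (wxD w 3 0 t)^2
      = (∫ x in (0:ℝ)..1, 2*(x-1)*Uc x t*V2c x t)
        + ∫ x in (0:ℝ)..1, (3*(X2 x t)^2 + 5*ζ*(X3 x t)^2) := by
    intro t ht
    rw [Set.uIcc_of_le hT0] at ht
    have h1 := part1 ζ T w hw t ht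
    have hcg : ∀ x ∈ Set.uIcc (0:ℝ) 1,
        2*(x-1)*wxD w 1 x t*wtD w T 2 x t + (3*(wxD w 2 x t)^2 + 5*ζ*(wxD w 3 x t)^2)
          = 2*(x-1)*Uc x t*V2c x t + (3*(X2 x t)^2 + 5*ζ*(X3 x t)^2) := by
      intro x hx
      rw [Set.uIcc_of_le zero_le_one] at hx
      simp only [hUcdef, hV2cdef, hX2def, hX3def]
      rw [hπ1id x hx, hπ2id t ht]
    rw [intervalIntegral.integral_congr hcg] at h1
    rw [intervalIntegral.integral_add
      ((by fun_prop : Continuous fun x => 2*(x-1)*Uc x t*V2c x t).intervalIntegrable _ _)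
      ((by fun_prop : Continuous fun x => 3*(X2 x t)^2 + 5*ζ*(X3 x t)^2).intervalIntegrable _ _)] at h1
    exact h1.symm
  -- parametric continuity of the inner integrals
  have hpar1 : Continuous fun t => ∫ x in (0:ℝ)..1, 2*(x-1)*Uc x t*V2c x t := by
    apply continuous_parametric_intervalIntegral_of_continuous' (μ := volume)
      (f := fun t x => 2*(x-1)*Uc x t*V2c x t)
    show Continuous fun p : ℝ × ℝ => 2*(p.2-1)*Uc p.2 p.1*V2c p.2 p.1
    fun_prop
  have hpar2 : Continuous fun t => ∫ x in (0:ℝ)..1, (3*(X2 x t)^2 + 5*ζ*(X3 x t)^2) := by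
    apply continuous_parametric_intervalIntegral_of_continuous' (μ := volume)
      (f := fun t x => 3*(X2 x t)^2 + 5*ζ*(X3 x t)^2)
    show Continuous fun p : ℝ × ℝ => 3*(X2 p.2 p.1)^2 + 5*ζ*(X3 p.2 p.1)^2
    fun_prop
  have hpar3 : Continuous fun t => ∫ x in (0:ℝ)..1, (Vc x t)^2 := by
    apply continuous_parametric_intervalIntegral_of_continuous' (μ := volume)
      (f := fun t x => (Vc x t)^2)
    show Continuous fun p : ℝ × ℝ => (Vc p.2 p.1)^2
    fun_prop
  -- left-hand side
  have hLHS : ∫ t in (0:ℝ)..T, ζ*(wxD w 3 0 t)^2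
      = (∫ t in (0:ℝ)..T, ∫ x in (0:ℝ)..1, 2*(x-1)*Uc x t*V2c x t)
        + ∫ t in (0:ℝ)..T, ∫ x in (0:ℝ)..1, (3*(X2 x t)^2 + 5*ζ*(X3 x t)^2) := by
    rw [intervalIntegral.integral_congr P1]
    exact intervalIntegral.integral_add (hpar1.intervalIntegrable _ _)
      (hpar2.intervalIntegrable _ _)
  -- right-hand side double integral
  have hRHS1 : (∫ t in (0:ℝ)..T, ∫ x in (0:ℝ)..1,
        ((wtD w T 1 x t)^2 + 3 * (wxD w 2 x t)^2 + 5 * ζ * (wxD w 3 x t)^2))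
      = (∫ t in (0:ℝ)..T, ∫ x in (0:ℝ)..1, (Vc x t)^2)
        + ∫ t in (0:ℝ)..T, ∫ x in (0:ℝ)..1, (3*(X2 x t)^2 + 5*ζ*(X3 x t)^2) := by
    have inner2 : ∀ t ∈ Set.uIcc (0:ℝ) T,
        (∫ x in (0:ℝ)..1, ((wtD w T 1 x t)^2 + 3 * (wxD w 2 x t)^2 + 5 * ζ * (wxD w 3 x t)^2))
          = (∫ x in (0:ℝ)..1, (Vc x t)^2)
            + ∫ x in (0:ℝ)..1, (3*(X2 x t)^2 + 5*ζ*(X3 x t)^2) := by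
      intro t ht
      rw [Set.uIcc_of_le hT0] at ht
      have hcg : ∀ x ∈ Set.uIcc (0:ℝ) 1,
          (wtD w T 1 x t)^2 + 3 * (wxD w 2 x t)^2 + 5 * ζ * (wxD w 3 x t)^2
            = (Vc x t)^2 + (3*(X2 x t)^2 + 5*ζ*(X3 x t)^2) := by
        intro x hx
        rw [Set.uIcc_of_le zero_le_one] at hx
        simp only [hVcdef, hX2def, hX3def]
        rw [hπ1id x hx, hπ2id t ht]
        ring
      rw [intervalIntegral.integral_congr hcg]
      exact intervalIntegral.integral_add
        ((by fun_prop : Continuous fun x => (Vc x t)^2).intervalIntegrable _ _)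
        ((by fun_prop : Continuous fun x => 3*(X2 x t)^2 + 5*ζ*(X3 x t)^2).intervalIntegrable _ _)
    rw [intervalIntegral.integral_congr inner2]
    exact intervalIntegral.integral_add (hpar3.intervalIntegrable _ _)
      (hpar2.intervalIntegrable _ _)
  -- right-hand side boundary term
  have hRHS2 : (2:ℝ) * (∫ x in (0:ℝ)..1,
        ((x - 1) * wxD w 1 x T * wtD w T 1 x T - (x - 1) * wxD w 1 x 0 * wtD w T 1 x 0))
      = (∫ x in (0:ℝ)..1, 2*(x-1)*Uc x T*Vc x T) - ∫ x in (0:ℝ)..1, 2*(x-1)*Uc x 0*Vc x 0 := by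
    rw [← intervalIntegral.integral_const_mul]
    have hcg : ∀ x ∈ Set.uIcc (0:ℝ) 1,
        2 * ((x - 1) * wxD w 1 x T * wtD w T 1 x T - (x - 1) * wxD w 1 x 0 * wtD w T 1 x 0)
          = 2*(x-1)*Uc x T*Vc x T - 2*(x-1)*Uc x 0*Vc x 0 := by
      intro x hx
      rw [Set.uIcc_of_le zero_le_one] at hx
      simp only [hUcdef, hVcdef]
      rw [hπ1id x hx, hπ2id T ⟨hT0, le_refl T⟩, hπ2id 0 ⟨le_refl (0:ℝ), hT0⟩]
      ring
    rw [intervalIntegral.integral_congr hcg]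
    exact intervalIntegral.integral_sub
      ((by fun_prop : Continuous fun x => 2*(x-1)*Uc x T*Vc x T).intervalIntegrable _ _)
      ((by fun_prop : Continuous fun x => 2*(x-1)*Uc x 0*Vc x 0).intervalIntegrable _ _)
  rw [hLHS, hRHS1, hRHS2]
  linarith [P2]
end

section
/- Let ζ > 0 and T > 0, and let w be a classical zero-input solution of the micro-beam system on [0,1] × [0,T] with total energy E(t) = K(t) + U(t). Then 2 E(0) T ≤ ∫₀ᵀ ∫₀¹ ((∂w/∂t)² + 3 (∂²w/∂x²)² + 5ζ (∂³w/∂x³)²) dx dt ≤ 10 E(0) T. -/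
open Set MeasureTheory intervalIntegral Filter Topology

section Helpers

lemma uIoc01_sub : uIoc (0:ℝ) 1 ⊆ Icc (0:ℝ) 1 := by
  rw [uIoc_of_le (by norm_num : (0:ℝ) ≤ 1)]; exact Ioc_subset_Icc_self

/-- FTC-2 with `HasDerivWithinAt` on a closed interval. -/
lemma ftcIcc {a b : ℝ} (hab : a ≤ b) {f f' : ℝ → ℝ}
    (hc : ContinuousOn f (Icc a b))
    (hd : ∀ x ∈ Icc a b, HasDerivWithinAt f (f' x) (Icc a b) x)
    (hc' : ContinuousOn f' (Icc a b)) :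
    ∫ x in a..b, f' x = f b - f a := by
  apply intervalIntegral.integral_eq_sub_of_hasDeriv_right_of_le hab hc
  · intro x hx
    exact (((hd x (Ioo_subset_Icc_self hx)).hasDerivAt
      (Icc_mem_nhds hx.1 hx.2))).hasDerivWithinAt
  · exact (by rw [uIcc_of_le hab]; exact hc' : ContinuousOn f' (uIcc a b)).intervalIntegrable

/-- Integration by parts on `[a,b]`. -/
lemma ibpIcc {a b : ℝ} (hab : a ≤ b) {f g f' g' : ℝ → ℝ}
    (hf : ∀ x ∈ Icc a b, HasDerivWithinAt f (f' x) (Icc a b) x)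
    (hg : ∀ x ∈ Icc a b, HasDerivWithinAt g (g' x) (Icc a b) x)
    (hcf : ContinuousOn f (Icc a b)) (hcg : ContinuousOn g (Icc a b))
    (hcf' : ContinuousOn f' (Icc a b)) (hcg' : ContinuousOn g' (Icc a b)) :
    ∫ x in a..b, f x * g' x
      = f b * g b - f a * g a - ∫ x in a..b, f' x * g x := by
  have h1 : ∫ x in a..b, (f' x * g x + f x * g' x) = f b * g b - f a * g a := by
    apply ftcIcc hab (hcf.mul hcg) (fun x hx => (hf x hx).mul (hg x hx))
      ((hcf'.mul hcg).add (hcf.mul hcg'))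
  have h2 : ∫ x in a..b, (f' x * g x + f x * g' x)
      = (∫ x in a..b, f' x * g x) + ∫ x in a..b, f x * g' x := by
    apply intervalIntegral.integral_add
    · exact (by rw [uIcc_of_le hab]; exact hcf'.mul hcg :
        ContinuousOn (fun x => f' x * g x) (uIcc a b)).intervalIntegrable
    · exact (by rw [uIcc_of_le hab]; exact hcf.mul hcg' :
        ContinuousOn (fun x => f x * g' x) (uIcc a b)).intervalIntegrable
  linarith [h1, h2]

/-- Continuity of a parametric interval integral. -/
lemma contParam {a b : ℝ} {F : ℝ → ℝ → ℝ}
    (hF : ContinuousOn (fun p : ℝ × ℝ => F p.1 p.2) (Icc (0:ℝ) 1 ×ˢ Icc a b)) :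
    ContinuousOn (fun s => ∫ x in (0:ℝ)..1, F x s) (Icc a b) := by
  intro s₀ hs₀
  obtain ⟨M, hM⟩ := (isCompact_Icc.prod isCompact_Icc).exists_bound_of_continuousOn hF
  have : Tendsto (fun s => ∫ x in (0:ℝ)..1, F x s) (𝓝[Icc a b] s₀)
      (𝓝 (∫ x in (0:ℝ)..1, F x s₀)) := by
    apply intervalIntegral.tendsto_integral_filter_of_dominated_convergence (bound := fun _ => M)
    · filter_upwards [self_mem_nhdsWithin] with s hs
      have hslice : ContinuousOn (fun x => F x s) (Icc (0:ℝ) 1) :=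
        hF.comp (Continuous.continuousOn (by continuity))
          (fun y (hy : y ∈ Icc (0:ℝ) 1) => Set.mk_mem_prod hy hs)
      exact (hslice.mono uIoc01_sub).aestronglyMeasurable measurableSet_uIoc
    · filter_upwards [self_mem_nhdsWithin] with s hs
      filter_upwards with x hx
      exact hM (x, s) (Set.mk_mem_prod (uIoc01_sub hx) hs)
    · exact intervalIntegrable_const
    · filter_upwards with x hx
      exact (hF.comp (Continuous.continuousOn (by continuity))
        (fun s (hy : s ∈ Icc a b) => Set.mk_mem_prod (uIoc01_sub hx) hy)) s₀ hs₀
  exact this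



/-- Fubini for continuous functions on `[0,1] × [0,t]`. -/
lemma swapInt {t : ℝ} (ht : 0 ≤ t) {F : ℝ → ℝ → ℝ}
    (hF : ContinuousOn (fun p : ℝ × ℝ => F p.1 p.2) (Icc (0:ℝ) 1 ×ˢ Icc 0 t)) :
    ∫ s in (0:ℝ)..t, ∫ x in (0:ℝ)..1, F x s = ∫ x in (0:ℝ)..1, ∫ s in (0:ℝ)..t, F x s := by
  simp only [intervalIntegral.integral_of_le ht,
    intervalIntegral.integral_of_le (by norm_num : (0:ℝ) ≤ 1)]
  have hcomp : ContinuousOn (fun p : ℝ × ℝ => F p.2 p.1) (Icc 0 t ×ˢ Icc (0:ℝ) 1) := by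
    have : (fun p : ℝ × ℝ => F p.2 p.1)
        = (fun p : ℝ × ℝ => F p.1 p.2) ∘ (fun p : ℝ × ℝ => (p.2, p.1)) := rfl
    rw [this]
    exact hF.comp (Continuous.continuousOn (by continuity)) (fun p hp => ⟨hp.2, hp.1⟩)
  have hint : IntegrableOn (fun p : ℝ × ℝ => F p.2 p.1) (Ioc 0 t ×ˢ Ioc (0:ℝ) 1)
      (volume.prod volume) := by
    apply IntegrableOn.mono_set (hcomp.integrableOn_compact (isCompact_Icc.prod isCompact_Icc))
    exact Set.prod_mono Ioc_subset_Icc_self Ioc_subset_Icc_self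
  have := MeasureTheory.integral_integral_swap
    (f := fun s x => F x s) (μ := volume.restrict (Ioc (0:ℝ) t))
    (ν := volume.restrict (Ioc (0:ℝ) 1)) ?_
  · exact this
  · rw [Measure.prod_restrict]
    exact hint


/-- Right-averaging of a continuous function converges to its value. -/
lemma tendsto_avg {T : ℝ} {g : ℝ → ℝ} (hg : ContinuousOn g (Icc 0 T))
    {c : ℝ} (hc : c ∈ Icc (0:ℝ) T) (hcT : c < T) :
    Tendsto (fun h => (1/h) * ∫ s in c..c+h, g s) (𝓝[>] (0:ℝ)) (𝓝 (g c)) := by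
  rw [Metric.tendsto_nhdsWithin_nhds]
  intro ε hε
  obtain ⟨δ, hδ, hδ'⟩ := (Metric.continuousWithinAt_iff).mp (hg c hc) (ε/2) (by linarith)
  refine ⟨min δ (T - c), by simp [hδ, sub_pos.mpr hcT], ?_⟩
  intro h hh hd
  have h0 : 0 < h := hh
  rw [Real.dist_eq, sub_zero, abs_of_pos h0] at hd
  have hhδ : h < δ := lt_of_lt_of_le hd (min_le_left _ _)
  have hhT : c + h ≤ T := by have := lt_of_lt_of_le hd (min_le_right _ _); linarith
  have hsub : Icc c (c+h) ⊆ Icc 0 T := Icc_subset_Icc hc.1 hhT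
  have hgi : IntervalIntegrable g volume c (c+h) := by
    apply ContinuousOn.intervalIntegrable
    rw [uIcc_of_le (by linarith)]
    exact hg.mono hsub
  have hconst : ∫ s in c..c+h, g c = h * g c := by
    rw [intervalIntegral.integral_const, smul_eq_mul]; ring
  have key : (1/h) * (∫ s in c..c+h, g s) - g c
      = (1/h) * ∫ s in c..c+h, (g s - g c) := by
    rw [intervalIntegral.integral_sub hgi intervalIntegrable_const, hconst]
    field_simp
  have hbound : ‖∫ s in c..c+h, (g s - g c)‖ ≤ (ε/2) * |c + h - c| := by
    apply intervalIntegral.norm_integral_le_of_norm_le_const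
    intro s hs
    rw [uIoc_of_le (by linarith : c ≤ c + h)] at hs
    have hs1 : s ∈ Icc 0 T := hsub ⟨le_of_lt hs.1, hs.2⟩
    have : dist s c < δ := by
      rw [Real.dist_eq, abs_of_pos (by linarith [hs.1] : 0 < s - c)]
      have := hs.2; linarith
    exact le_of_lt (hδ' hs1 this)
  rw [Real.dist_eq, key]
  have : |(1/h) * ∫ s in c..c+h, (g s - g c)| ≤ (1/h) * ((ε/2) * |c + h - c|) := by
    rw [abs_mul, abs_of_pos (by positivity : (0:ℝ) < 1/h)]
    exact mul_le_mul_of_nonneg_left hbound (by positivity)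
  have heq : (1/h) * ((ε/2) * |c + h - c|) = ε/2 := by
    rw [show c + h - c = h by ring, abs_of_pos h0]; field_simp
  calc |(1/h) * ∫ s in c..c+h, (g s - g c)| ≤ ε/2 := by rw [heq] at this; exact this
    _ < ε := by linarith

end Helpers

namespace BeamAux

variable {ζ T : ℝ} {w : ℝ → ℝ → ℝ}

@[simp] lemma wxD_zero (w : ℝ → ℝ → ℝ) (x t : ℝ) : wxD w 0 x t = w x t := by
  simp [wxD]

@[simp] lemma wtD_zero (w : ℝ → ℝ → ℝ) (T x t : ℝ) : wtD w T 0 x t = w x t := by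
  simp [wtD]

lemma hasDeriv_x (hw : IsBeamSolution ζ T w) {t : ℝ} (ht : t ∈ Icc (0:ℝ) T)
    {m : ℕ} (hm : m < 6) {x : ℝ} (hx : x ∈ Icc (0:ℝ) 1) :
    HasDerivWithinAt (fun x' => wxD w m x' t) (wxD w (m+1) x t) (Icc (0:ℝ) 1) x := by
  have hu : UniqueDiffOn ℝ (Icc (0:ℝ) 1) := uniqueDiffOn_Icc one_pos
  have hd : DifferentiableOn ℝ (iteratedDerivWithin m (fun x' => w x' t) (Icc 0 1)) (Icc 0 1) :=
    (hw.1 t ht).differentiableOn_iteratedDerivWithin (by exact_mod_cast hm) hu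
  have h2 := (hd x hx).hasDerivWithinAt
  have h3 : wxD w (m+1) x t
      = derivWithin (iteratedDerivWithin m (fun x' => w x' t) (Icc 0 1)) (Icc 0 1) x := by
    rw [wxD, iteratedDerivWithin_succ]
  show HasDerivWithinAt (fun x' => iteratedDerivWithin m (fun x'' => w x'' t) (Icc 0 1) x')
      (wxD w (m+1) x t) (Icc (0:ℝ) 1) x
  rw [h3]; exact h2

lemma hasDeriv_t (hT : 0 < T) (hw : IsBeamSolution ζ T w) {x : ℝ} (hx : x ∈ Icc (0:ℝ) 1)
    {k : ℕ} (hk : k < 2) {t : ℝ} (ht : t ∈ Icc (0:ℝ) T) :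
    HasDerivWithinAt (fun t' => wtD w T k x t') (wtD w T (k+1) x t) (Icc (0:ℝ) T) t := by
  have hu : UniqueDiffOn ℝ (Icc (0:ℝ) T) := uniqueDiffOn_Icc hT
  have hd : DifferentiableOn ℝ (iteratedDerivWithin k (fun t' => w x t') (Icc 0 T)) (Icc 0 T) :=
    (hw.2.1 x hx).differentiableOn_iteratedDerivWithin (by exact_mod_cast hk) hu
  have h2 := (hd t ht).hasDerivWithinAt
  have h3 : wtD w T (k+1) x t
      = derivWithin (iteratedDerivWithin k (fun t' => w x t') (Icc 0 T)) (Icc 0 T) t := by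
    rw [wtD, iteratedDerivWithin_succ]
  show HasDerivWithinAt (fun t' => iteratedDerivWithin k (fun t'' => w x t'') (Icc 0 T) t')
      (wtD w T (k+1) x t) (Icc (0:ℝ) T) t
  rw [h3]; exact h2

lemma contX (hw : IsBeamSolution ζ T w) {m : ℕ} (hm : m ≤ 6) {t : ℝ} (ht : t ∈ Icc (0:ℝ) T) :
    ContinuousOn (fun x => wxD w m x t) (Icc (0:ℝ) 1) :=
  (hw.2.2.1 m hm).comp (Continuous.continuousOn (by continuity))
    (fun x hx => Set.mk_mem_prod hx ht)

lemma contT (hw : IsBeamSolution ζ T w) {k : ℕ} (hk : k ≤ 2) {x : ℝ} (hx : x ∈ Icc (0:ℝ) 1) :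
    ContinuousOn (fun t => wtD w T k x t) (Icc (0:ℝ) T) :=
  (hw.2.2.2.1 k hk).comp (Continuous.continuousOn (by continuity))
    (fun t ht => Set.mk_mem_prod hx ht)


lemma intInt01 {f : ℝ → ℝ} (hf : ContinuousOn f (Icc (0:ℝ) 1)) :
    IntervalIntegrable f volume 0 1 :=
  (by rw [uIcc_of_le (by norm_num : (0:ℝ) ≤ 1)]; exact hf :
    ContinuousOn f (uIcc (0:ℝ) 1)).intervalIntegrable

/-- The key spatial integration-by-parts identity using the boundary conditions. -/
lemma ibp_main (hζ : 0 < ζ) (hw : IsBeamSolution ζ T w) {s σ τ : ℝ}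
    (hs : s ∈ Icc (0:ℝ) T) (hσ : σ ∈ Icc (0:ℝ) T) (hτ : τ ∈ Icc (0:ℝ) T) :
    ∫ x in (0:ℝ)..1, (w x σ - w x s) * (wxD w 4 x τ - ζ * wxD w 6 x τ)
      = ∫ x in (0:ℝ)..1,
        ((wxD w 2 x σ - wxD w 2 x s) * wxD w 2 x τ
          + ζ * ((wxD w 3 x σ - wxD w 3 x s) * wxD w 3 x τ)) := by
  set F : ℕ → ℝ → ℝ := fun m x => wxD w m x σ - wxD w m x s with hFdef
  set V : ℕ → ℝ → ℝ := fun m x => wxD w m x τ with hVdef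
  have hFd : ∀ m, m < 6 → ∀ x ∈ Icc (0:ℝ) 1,
      HasDerivWithinAt (F m) (F (m+1) x) (Icc (0:ℝ) 1) x := fun m hm x hx =>
    (hasDeriv_x hw hσ hm hx).sub (hasDeriv_x hw hs hm hx)
  have hVd : ∀ m, m < 6 → ∀ x ∈ Icc (0:ℝ) 1,
      HasDerivWithinAt (V m) (V (m+1) x) (Icc (0:ℝ) 1) x := fun m hm x hx =>
    hasDeriv_x hw hτ hm hx
  have hFc : ∀ m, m ≤ 6 → ContinuousOn (F m) (Icc (0:ℝ) 1) := fun m hm =>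
    (contX hw hm hσ).sub (contX hw hm hs)
  have hVc : ∀ m, m ≤ 6 → ContinuousOn (V m) (Icc (0:ℝ) 1) := fun m hm => contX hw hm hτ
  have e1 := ibpIcc zero_le_one (hFd 0 (by norm_num)) (hVd 3 (by norm_num))
    (hFc 0 (by norm_num)) (hVc 3 (by norm_num)) (hFc 1 (by norm_num)) (hVc 4 (by norm_num))
  have e2 := ibpIcc zero_le_one (hFd 1 (by norm_num)) (hVd 2 (by norm_num))
    (hFc 1 (by norm_num)) (hVc 2 (by norm_num)) (hFc 2 (by norm_num)) (hVc 3 (by norm_num))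
  have e3 := ibpIcc zero_le_one (hFd 0 (by norm_num)) (hVd 5 (by norm_num))
    (hFc 0 (by norm_num)) (hVc 5 (by norm_num)) (hFc 1 (by norm_num)) (hVc 6 (by norm_num))
  have e4 := ibpIcc zero_le_one (hFd 1 (by norm_num)) (hVd 4 (by norm_num))
    (hFc 1 (by norm_num)) (hVc 4 (by norm_num)) (hFc 2 (by norm_num)) (hVc 5 (by norm_num))
  have e5 := ibpIcc zero_le_one (hFd 2 (by norm_num)) (hVd 3 (by norm_num))
    (hFc 2 (by norm_num)) (hVc 3 (by norm_num)) (hFc 3 (by norm_num)) (hVc 4 (by norm_num))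
  have hbτ := hw.2.2.2.2.2 τ hτ
  have hbσ := hw.2.2.2.2.2 σ hσ
  have hbs := hw.2.2.2.2.2 s hs
  have hF00 : F 0 0 = 0 := by simp [hFdef, hbσ.1, hbs.1]
  have hF10 : F 1 0 = 0 := by simp [hFdef, hbσ.2.1, hbs.2.1]
  have hF20 : F 2 0 = 0 := by simp [hFdef, hbσ.2.2.1, hbs.2.2.1]
  have hV31 : V 3 1 = 0 := by
    have h := hbτ.2.2.2.2.2
    have : ζ * V 3 1 = 0 := h
    exact (mul_eq_zero.mp this).resolve_left (ne_of_gt hζ)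
  have hV51 : V 5 1 = 0 := by
    have h := hbτ.2.2.2.1
    have h2 : ζ * V 5 1 = V 3 1 := by simpa [hVdef] using by linarith [h]
    have : ζ * V 5 1 = 0 := by rw [h2, hV31]
    exact (mul_eq_zero.mp this).resolve_left (ne_of_gt hζ)
  have hV21 : V 2 1 = ζ * V 4 1 := by
    have h := hbτ.2.2.2.2.1
    simp only [hVdef]
    linarith [h]
  simp only [hF00, hF10, hF20, hV31, hV51, hV21, mul_zero, zero_mul, sub_zero,
    zero_sub, sub_self] at e1 e2 e3 e4 e5
  -- split the left-hand side
  have hL : ∫ x in (0:ℝ)..1, (w x σ - w x s) * (wxD w 4 x τ - ζ * wxD w 6 x τ)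
      = (∫ x in (0:ℝ)..1, F 0 x * V 4 x) - ζ * ∫ x in (0:ℝ)..1, F 0 x * V 6 x := by
    rw [← intervalIntegral.integral_const_mul, ← intervalIntegral.integral_sub
      (f := fun x => F 0 x * V 4 x) (g := fun x => ζ * (F 0 x * V 6 x))
      (intInt01 ((hFc 0 (by norm_num)).mul (hVc 4 (by norm_num))))
      ((intInt01 ((hFc 0 (by norm_num)).mul (hVc 6 (by norm_num)))).const_mul ζ)]
    apply intervalIntegral.integral_congr
    intro x hx
    simp [hFdef, hVdef]
    ring
  have hR : ∫ x in (0:ℝ)..1,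
        ((wxD w 2 x σ - wxD w 2 x s) * wxD w 2 x τ
          + ζ * ((wxD w 3 x σ - wxD w 3 x s) * wxD w 3 x τ))
      = (∫ x in (0:ℝ)..1, F 2 x * V 2 x) + ζ * ∫ x in (0:ℝ)..1, F 3 x * V 3 x := by
    rw [← intervalIntegral.integral_const_mul, ← intervalIntegral.integral_add
      (f := fun x => F 2 x * V 2 x) (g := fun x => ζ * (F 3 x * V 3 x))
      (intInt01 ((hFc 2 (by norm_num)).mul (hVc 2 (by norm_num))))
      ((intInt01 ((hFc 3 (by norm_num)).mul (hVc 3 (by norm_num)))).const_mul ζ)]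
  rw [hL, hR]
  linear_combination e1 - e2 - ζ * e3 + ζ * e4 - ζ * e5


lemma contTx (hw : IsBeamSolution ζ T w) {k : ℕ} (hk : k ≤ 2) {t : ℝ} (ht : t ∈ Icc (0:ℝ) T) :
    ContinuousOn (fun x => wtD w T k x t) (Icc (0:ℝ) 1) :=
  (hw.2.2.2.1 k hk).comp (Continuous.continuousOn (by continuity))
    (fun x hx => Set.mk_mem_prod hx ht)

set_option maxHeartbeats 1000000 in
lemma energy_const (hζ : 0 < ζ) (hT : 0 < T) (hw : IsBeamSolution ζ T w) :
    ∀ t ∈ Icc (0:ℝ) T, totE ζ w T t = totE ζ w T 0 := by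
  classical
  set kk : ℝ → ℝ := fun s => ∫ x in (0:ℝ)..1, (wtD w T 1 x s)^2 with hkk
  set g : ℝ → ℝ := fun s => ∫ x in (0:ℝ)..1, ((wxD w 2 x s)^2 + ζ * (wxD w 3 x s)^2) with hgg
  have hkkc : ContinuousOn kk (Icc (0:ℝ) T) :=
    contParam ((hw.2.2.2.1 1 (by norm_num)).pow 2)
  have hgc : ContinuousOn g (Icc (0:ℝ) T) :=
    contParam (((hw.2.2.1 2 (by norm_num)).pow 2).add
      (continuousOn_const.mul ((hw.2.2.1 3 (by norm_num)).pow 2)))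
  have key : ∀ t, t ∈ Icc (0:ℝ) T → t < T → kk t + g t = kk 0 + g 0 := by
    intro t ht htT
    have ht0 : 0 ≤ t := ht.1
    have hIattoT : Icc (0:ℝ) t ⊆ Icc (0:ℝ) T := Icc_subset_Icc le_rfl (le_of_lt htT)
    set P : ℝ → ℝ := fun h => ∫ s in (0:ℝ)..t, ∫ x in (0:ℝ)..1,
        (w x (s+h) - w x s) * ((wxD w 4 x s - ζ * wxD w 6 x s)
          + (wxD w 4 x (s+h) - ζ * wxD w 6 x (s+h))) with hP
    have hIocmem : Ioc (0:ℝ) (T - t) ∈ 𝓝[>] (0:ℝ) :=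
      Ioc_mem_nhdsGT_of_mem ⟨le_rfl, sub_pos.mpr htT⟩
    have hgsub : ∀ a b : ℝ, a ∈ Icc (0:ℝ) T → b ∈ Icc (0:ℝ) T →
        IntervalIntegrable g volume a b := by
      intro a b ha hb
      apply ContinuousOn.intervalIntegrable
      apply hgc.mono
      rw [uIcc]
      exact Icc_subset_Icc (le_inf ha.1 hb.1) (sup_le ha.2 hb.2)
    have claimA : ∀ h ∈ Ioc (0:ℝ) (T - t),
        P h = (∫ s in t..t+h, g s) - ∫ s in (0:ℝ)..h, g s := by
      intro h hh
      have hh0 : 0 < h := hh.1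
      have hhT : h ≤ T - t := hh.2
      have hmem : ∀ s ∈ uIcc (0:ℝ) t, s ∈ Icc (0:ℝ) T ∧ s + h ∈ Icc (0:ℝ) T := by
        intro s hs
        rw [uIcc_of_le ht0] at hs
        exact ⟨⟨hs.1, le_trans hs.2 (le_of_lt htT)⟩,
          ⟨by linarith [hs.1], by linarith [hs.2]⟩⟩
      have hstep : ∀ s ∈ uIcc (0:ℝ) t,
          (∫ x in (0:ℝ)..1, (w x (s+h) - w x s) * ((wxD w 4 x s - ζ * wxD w 6 x s)
            + (wxD w 4 x (s+h) - ζ * wxD w 6 x (s+h)))) = g (s+h) - g s := by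
        intro s hs
        obtain ⟨hs1, hs2⟩ := hmem s hs
        have cW1 : ContinuousOn (fun x => w x (s+h)) (Icc (0:ℝ) 1) := by
          have := contX hw (m := 0) (by norm_num) hs2; simpa using this
        have cW0 : ContinuousOn (fun x => w x s) (Icc (0:ℝ) 1) := by
          have := contX hw (m := 0) (by norm_num) hs1; simpa using this
        have cq0 : ContinuousOn (fun x => wxD w 4 x s - ζ * wxD w 6 x s) (Icc (0:ℝ) 1) :=
          (contX hw (by norm_num) hs1).sub
            (continuousOn_const.mul (contX hw (by norm_num) hs1))
        have cq1 : ContinuousOn (fun x => wxD w 4 x (s+h) - ζ * wxD w 6 x (s+h)) (Icc (0:ℝ) 1) :=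
          (contX hw (by norm_num) hs2).sub
            (continuousOn_const.mul (contX hw (by norm_num) hs2))
        have hsplit0 : (∫ x in (0:ℝ)..1, (w x (s+h) - w x s) * ((wxD w 4 x s - ζ * wxD w 6 x s)
              + (wxD w 4 x (s+h) - ζ * wxD w 6 x (s+h))))
            = (∫ x in (0:ℝ)..1, (w x (s+h) - w x s) * (wxD w 4 x s - ζ * wxD w 6 x s))
              + ∫ x in (0:ℝ)..1, (w x (s+h) - w x s) * (wxD w 4 x (s+h) - ζ * wxD w 6 x (s+h)) := by
          rw [← intervalIntegral.integral_add
            (f := fun x => (w x (s+h) - w x s) * (wxD w 4 x s - ζ * wxD w 6 x s))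
            (g := fun x => (w x (s+h) - w x s) * (wxD w 4 x (s+h) - ζ * wxD w 6 x (s+h)))
            (intInt01 ((cW1.sub cW0).mul cq0)) (intInt01 ((cW1.sub cW0).mul cq1))]
          apply intervalIntegral.integral_congr
          intro x hx
          ring
        have e1 := ibp_main hζ hw hs1 hs2 hs1
        have e2 := ibp_main hζ hw hs1 hs2 hs2
        rw [hsplit0, e1, e2]
        have c2a : ContinuousOn (fun x => wxD w 2 x (s+h)) (Icc (0:ℝ) 1) :=
          contX hw (by norm_num) hs2
        have c2b : ContinuousOn (fun x => wxD w 2 x s) (Icc (0:ℝ) 1) :=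
          contX hw (by norm_num) hs1
        have c3a : ContinuousOn (fun x => wxD w 3 x (s+h)) (Icc (0:ℝ) 1) :=
          contX hw (by norm_num) hs2
        have c3b : ContinuousOn (fun x => wxD w 3 x s) (Icc (0:ℝ) 1) :=
          contX hw (by norm_num) hs1
        have i1 : IntervalIntegrable (fun x => (wxD w 2 x (s+h) - wxD w 2 x s) * wxD w 2 x s
            + ζ * ((wxD w 3 x (s+h) - wxD w 3 x s) * wxD w 3 x s)) volume 0 1 :=
          intInt01 (((c2a.sub c2b).mul c2b).add
            (continuousOn_const.mul ((c3a.sub c3b).mul c3b)))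
        have i2 : IntervalIntegrable (fun x => (wxD w 2 x (s+h) - wxD w 2 x s) * wxD w 2 x (s+h)
            + ζ * ((wxD w 3 x (s+h) - wxD w 3 x s) * wxD w 3 x (s+h))) volume 0 1 :=
          intInt01 (((c2a.sub c2b).mul c2a).add
            (continuousOn_const.mul ((c3a.sub c3b).mul c3a)))
        rw [← intervalIntegral.integral_add i1 i2]
        have hgdiff : g (s+h) - g s = ∫ x in (0:ℝ)..1,
            (((wxD w 2 x (s+h))^2 + ζ * (wxD w 3 x (s+h))^2)
              - ((wxD w 2 x s)^2 + ζ * (wxD w 3 x s)^2)) := by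
          rw [intervalIntegral.integral_sub
            (f := fun x => (wxD w 2 x (s+h))^2 + ζ * (wxD w 3 x (s+h))^2)
            (g := fun x => (wxD w 2 x s)^2 + ζ * (wxD w 3 x s)^2)
            (intInt01 ((c2a.pow 2).add (continuousOn_const.mul (c3a.pow 2))))
            (intInt01 ((c2b.pow 2).add (continuousOn_const.mul (c3b.pow 2))))]
        rw [hgdiff]
        apply intervalIntegral.integral_congr
        intro x hx
        ring
      have hPh : P h = ∫ s in (0:ℝ)..t, (g (s+h) - g s) := by
        simp only [hP]
        exact intervalIntegral.integral_congr hstep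
      have hmemA : ∀ s ∈ Icc (0:ℝ) t, s + h ∈ Icc (0:ℝ) T := fun s hs =>
        ⟨by linarith [hs.1], by linarith [hs.2]⟩
      have hgsh : IntervalIntegrable (fun s => g (s+h)) volume 0 t := by
        apply ContinuousOn.intervalIntegrable
        rw [uIcc_of_le ht0]
        exact hgc.comp (Continuous.continuousOn (by continuity)) hmemA
      have hgt : IntervalIntegrable g volume 0 t := hgsub 0 t ⟨le_rfl, le_of_lt hT⟩ ht
      have hshift : (∫ s in (0:ℝ)..t, g (s+h)) = ∫ s in h..t+h, g s := by
        simpa using intervalIntegral.integral_comp_add_right (a := (0:ℝ)) (b := t) g h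
      have hmh : h ∈ Icc (0:ℝ) T := ⟨le_of_lt hh0, by linarith⟩
      have hmth : t + h ∈ Icc (0:ℝ) T := ⟨by linarith, by linarith⟩
      have I1 := intervalIntegral.integral_add_adjacent_intervals
        (hgsub h t hmh ht) (hgsub t (t+h) ht hmth)
      have I2 := intervalIntegral.integral_add_adjacent_intervals
        (hgsub 0 h ⟨le_rfl, le_of_lt hT⟩ hmh) (hgsub h t hmh ht)
      rw [hPh, intervalIntegral.integral_sub hgsh hgt, hshift]
      linarith
    have claimB : Tendsto (fun h => (1/h) * P h) (𝓝[>] (0:ℝ)) (𝓝 (g t - g 0)) := by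
      have hB1 := tendsto_avg hgc ht htT
      have hB2 := tendsto_avg hgc ⟨le_rfl, le_of_lt hT⟩ hT
      have hB2' : Tendsto (fun h => (1/h) * ∫ s in (0:ℝ)..h, g s) (𝓝[>] (0:ℝ)) (𝓝 (g 0)) := by
        simpa using hB2
      have h1 := hB1.sub hB2'
      apply h1.congr'
      filter_upwards [hIocmem] with h hh
      rw [claimA h hh]
      ring
    have claimC : Tendsto (fun h => (1/h) * P h) (𝓝[>] (0:ℝ)) (𝓝 (kk 0 - kk t)) := by
      obtain ⟨Mu, hMu⟩ := (isCompact_Icc.prod isCompact_Icc).exists_bound_of_continuousOn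
        (hw.2.2.2.1 1 (by norm_num))
      obtain ⟨M2, hM2⟩ := (isCompact_Icc.prod isCompact_Icc).exists_bound_of_continuousOn
        (hw.2.2.2.1 2 (by norm_num))
      have h00mem : ((0:ℝ), (0:ℝ)) ∈ Icc (0:ℝ) 1 ×ˢ Icc (0:ℝ) T :=
        ⟨⟨le_rfl, zero_le_one⟩, ⟨le_rfl, le_of_lt hT⟩⟩
      have hMu0 : 0 ≤ Mu := le_trans (norm_nonneg _) (hMu _ h00mem)
      have hM20 : 0 ≤ M2 := le_trans (norm_nonneg _) (hM2 _ h00mem)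
      have hderW : ∀ x ∈ Icc (0:ℝ) 1, ∀ r ∈ Icc (0:ℝ) T,
          HasDerivWithinAt (fun t' => w x t') (wtD w T 1 x r) (Icc (0:ℝ) T) r := by
        intro x hx r hr
        have := hasDeriv_t hT hw hx (k := 0) (by norm_num) hr
        simpa using this
      have hquot : ∀ x ∈ Icc (0:ℝ) 1, ∀ s ∈ Icc (0:ℝ) T, ∀ h : ℝ, 0 < h →
          s + h ∈ Icc (0:ℝ) T → |(w x (s+h) - w x s)/h| ≤ Mu := by
        intro x hx s hs h h0 hsh
        have hmvt := Convex.norm_image_sub_le_of_norm_hasDerivWithin_le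
          (hderW x hx) (fun r hr => hMu (x, r) ⟨hx, hr⟩) (convex_Icc 0 T) hs hsh
        rw [Real.norm_eq_abs, Real.norm_eq_abs] at hmvt
        rw [abs_div, abs_of_pos h0, div_le_iff₀ h0]
        calc |w x (s+h) - w x s| ≤ Mu * |s + h - s| := hmvt
          _ = Mu * h := by rw [show s + h - s = h by ring, abs_of_pos h0]
      have hbnd : ∀ h : ℝ, 0 < h → ∀ s ∈ Icc (0:ℝ) T, s + h ∈ Icc (0:ℝ) T →
          ∀ x ∈ Icc (0:ℝ) 1,
          ‖((w x (s+h) - w x s)/h) * (-(wtD w T 2 x s + wtD w T 2 x (s+h)))‖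
            ≤ Mu * (2 * M2) := by
        intro h h0 s hs hsh x hx
        rw [Real.norm_eq_abs, abs_mul, abs_neg]
        have h1 : |(w x (s+h) - w x s)/h| ≤ Mu := hquot x hx s hs h h0 hsh
        have h2 : |wtD w T 2 x s + wtD w T 2 x (s+h)| ≤ 2 * M2 := by
          calc |wtD w T 2 x s + wtD w T 2 x (s+h)|
              ≤ |wtD w T 2 x s| + |wtD w T 2 x (s+h)| := abs_add_le _ _
            _ ≤ M2 + M2 := add_le_add (hM2 (x,s) ⟨hx, hs⟩) (hM2 (x,s+h) ⟨hx, hsh⟩)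
            _ = 2 * M2 := by ring
        exact mul_le_mul h1 h2 (abs_nonneg _) hMu0
      set Φ : ℝ → ℝ → ℝ := fun h s => ∫ x in (0:ℝ)..1,
          ((w x (s+h) - w x s)/h) * (-(wtD w T 2 x s + wtD w T 2 x (s+h))) with hΦ
      set ψ : ℝ → ℝ := fun s => ∫ x in (0:ℝ)..1,
          (wtD w T 1 x s) * (-(2 * wtD w T 2 x s)) with hψ
      have hW : ContinuousOn (fun p : ℝ × ℝ => w p.1 p.2)
          (Icc (0:ℝ) 1 ×ˢ Icc (0:ℝ) T) := by
        have := hw.2.2.1 0 (by norm_num); simpa using this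
      have hU2 : ContinuousOn (fun p : ℝ × ℝ => wtD w T 2 p.1 p.2)
          (Icc (0:ℝ) 1 ×ˢ Icc (0:ℝ) T) := hw.2.2.2.1 2 (by norm_num)
      have hIsubt : uIoc (0:ℝ) t ⊆ Icc (0:ℝ) t := by
        rw [uIoc_of_le ht0]; exact Ioc_subset_Icc_self
      have c_eq : ∀ᶠ h in 𝓝[>] (0:ℝ), (∫ s in (0:ℝ)..t, Φ h s) = (1/h) * P h := by
        filter_upwards [hIocmem] with h hh
        simp only [hP, hΦ]
        rw [← intervalIntegral.integral_const_mul]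
        apply intervalIntegral.integral_congr
        intro s hs
        beta_reduce
        rw [uIcc_of_le ht0] at hs
        have hs1 : s ∈ Icc (0:ℝ) T := hIattoT hs
        have hs2 : s + h ∈ Icc (0:ℝ) T := ⟨by linarith [hs.1, hh.1.le], by linarith [hs.2, hh.2]⟩
        rw [← intervalIntegral.integral_const_mul]
        apply intervalIntegral.integral_congr
        intro x hx
        beta_reduce
        rw [uIcc_of_le (by norm_num : (0:ℝ) ≤ 1)] at hx
        have hp1 : wxD w 4 x s - ζ * wxD w 6 x s = -(wtD w T 2 x s) := by
          have := hw.2.2.2.2.1 x hx s hs1; linarith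
        have hp2 : wxD w 4 x (s+h) - ζ * wxD w 6 x (s+h) = -(wtD w T 2 x (s+h)) := by
          have := hw.2.2.2.2.1 x hx (s+h) hs2; linarith
        rw [hp1, hp2]
        ring
      have houter : Tendsto (fun h => ∫ s in (0:ℝ)..t, Φ h s) (𝓝[>] (0:ℝ))
          (𝓝 (∫ s in (0:ℝ)..t, ψ s)) := by
        apply intervalIntegral.tendsto_integral_filter_of_dominated_convergence
          (bound := fun _ => Mu * (2 * M2))
        · filter_upwards [hIocmem] with h hh
          have hcont : ContinuousOn (Φ h) (Icc (0:ℝ) t) := by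
            simp only [hΦ]
            apply contParam (F := fun x s =>
              ((w x (s+h) - w x s)/h) * (-(wtD w T 2 x s + wtD w T 2 x (s+h))))
            have hmaps : MapsTo (fun p : ℝ × ℝ => (p.1, p.2 + h))
                (Icc (0:ℝ) 1 ×ˢ Icc 0 t) (Icc (0:ℝ) 1 ×ˢ Icc (0:ℝ) T) := by
              intro p hp
              simp only [mem_prod, mem_Icc] at hp ⊢
              exact ⟨⟨hp.1.1, hp.1.2⟩,
                ⟨by linarith [hp.2.1, hh.1.le], by linarith [hp.2.2, hh.2]⟩⟩
            have m1 : ContinuousOn (fun p : ℝ × ℝ => w p.1 (p.2 + h))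
                (Icc (0:ℝ) 1 ×ˢ Icc 0 t) :=
              ContinuousOn.comp (g := fun p : ℝ × ℝ => w p.1 p.2)
                (f := fun p : ℝ × ℝ => (p.1, p.2 + h)) hW
                (Continuous.continuousOn
                  (continuous_fst.prodMk (continuous_snd.add continuous_const))) hmaps
            have m0 : ContinuousOn (fun p : ℝ × ℝ => w p.1 p.2) (Icc (0:ℝ) 1 ×ˢ Icc 0 t) :=
              hW.mono (prod_mono_right (Icc_subset_Icc le_rfl (le_of_lt htT)))
            have m2s : ContinuousOn (fun p : ℝ × ℝ => wtD w T 2 p.1 p.2)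
                (Icc (0:ℝ) 1 ×ˢ Icc 0 t) :=
              hU2.mono (prod_mono_right (Icc_subset_Icc le_rfl (le_of_lt htT)))
            have m2h : ContinuousOn (fun p : ℝ × ℝ => wtD w T 2 p.1 (p.2 + h))
                (Icc (0:ℝ) 1 ×ˢ Icc 0 t) :=
              ContinuousOn.comp (g := fun p : ℝ × ℝ => wtD w T 2 p.1 p.2)
                (f := fun p : ℝ × ℝ => (p.1, p.2 + h)) hU2
                (Continuous.continuousOn
                  (continuous_fst.prodMk (continuous_snd.add continuous_const))) hmaps
            exact ((m1.sub m0).div_const h).mul ((m2s.add m2h).neg)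
          exact (hcont.mono hIsubt).aestronglyMeasurable measurableSet_uIoc
        · filter_upwards [hIocmem] with h hh
          filter_upwards with s
          intro hsI
          have hs' : s ∈ Ioc 0 t := by rwa [uIoc_of_le ht0] at hsI
          have hs1 : s ∈ Icc (0:ℝ) T := ⟨le_of_lt hs'.1, le_trans hs'.2 (le_of_lt htT)⟩
          have hs2 : s + h ∈ Icc (0:ℝ) T :=
            ⟨by linarith [hs1.1, hh.1.le], by linarith [hs'.2, hh.2]⟩
          simp only [hΦ]
          have := intervalIntegral.norm_integral_le_of_norm_le_const
            (C := Mu * (2 * M2))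
            (f := fun x => ((w x (s+h) - w x s)/h) * (-(wtD w T 2 x s + wtD w T 2 x (s+h))))
            (fun x hx => hbnd h hh.1 s hs1 hs2 x (uIoc01_sub hx))
          simpa using this
        · exact intervalIntegrable_const
        · filter_upwards with s
          intro hsI
          have hs' : s ∈ Ioc 0 t := by rwa [uIoc_of_le ht0] at hsI
          have hs1 : s ∈ Icc (0:ℝ) T := ⟨le_of_lt hs'.1, le_trans hs'.2 (le_of_lt htT)⟩
          simp only [hΦ, hψ]
          apply intervalIntegral.tendsto_integral_filter_of_dominated_convergence
            (bound := fun _ => Mu * (2 * M2))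
          · filter_upwards [hIocmem] with h hh
            have hs2 : s + h ∈ Icc (0:ℝ) T :=
              ⟨by linarith [hs1.1, hh.1.le], by linarith [hs'.2, hh.2]⟩
            have cW1 : ContinuousOn (fun x => w x (s+h)) (Icc (0:ℝ) 1) := by
              have := contX hw (m := 0) (by norm_num) hs2; simpa using this
            have cW0 : ContinuousOn (fun x => w x s) (Icc (0:ℝ) 1) := by
              have := contX hw (m := 0) (by norm_num) hs1; simpa using this
            have hcx : ContinuousOn (fun x =>
                ((w x (s+h) - w x s)/h) * (-(wtD w T 2 x s + wtD w T 2 x (s+h))))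
                (Icc (0:ℝ) 1) :=
              ((cW1.sub cW0).div_const h).mul
                (((contTx hw (by norm_num) hs1).add (contTx hw (by norm_num) hs2)).neg)
            exact (hcx.mono uIoc01_sub).aestronglyMeasurable measurableSet_uIoc
          · filter_upwards [hIocmem] with h hh
            filter_upwards with x
            intro hxI
            have hs2 : s + h ∈ Icc (0:ℝ) T :=
              ⟨by linarith [hs1.1, hh.1.le], by linarith [hs'.2, hh.2]⟩
            exact hbnd h hh.1 s hs1 hs2 x (uIoc01_sub hxI)
          · exact intervalIntegrable_const
          · filter_upwards with x
            intro hxI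
            have hx' : x ∈ Icc (0:ℝ) 1 := uIoc01_sub hxI
            have hmap : Tendsto (fun h : ℝ => s + h) (𝓝[>] (0:ℝ))
                (𝓝[Icc (0:ℝ) T \ {s}] s) := by
              rw [tendsto_nhdsWithin_iff]
              constructor
              · have h0 : Tendsto (fun h : ℝ => s + h) (𝓝 (0:ℝ)) (𝓝 (s + 0)) :=
                  (continuous_const.add continuous_id).tendsto 0
                rw [add_zero] at h0
                exact h0.mono_left nhdsWithin_le_nhds
              · filter_upwards [hIocmem] with h hh
                refine ⟨⟨by linarith [hs1.1, hh.1.le], by linarith [hs'.2, hh.2]⟩, ?_⟩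
                simp only [mem_singleton_iff]
                intro habs
                have : h = 0 := by linarith
                exact absurd this (ne_of_gt hh.1)
            have hmap2 : Tendsto (fun h : ℝ => s + h) (𝓝[>] (0:ℝ)) (𝓝[Icc (0:ℝ) T] s) :=
              hmap.mono_right (nhdsWithin_mono _ diff_subset)
            have hquotlim : Tendsto (fun h => (w x (s+h) - w x s)/h) (𝓝[>] (0:ℝ))
                (𝓝 (wtD w T 1 x s)) := by
              have hd := hderW x hx' s hs1
              rw [hasDerivWithinAt_iff_tendsto_slope] at hd
              apply (hd.comp hmap).congr
              intro h
              show slope (fun t' => w x t') s (s + h) = (w x (s+h) - w x s)/h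
              rw [slope_def_field, add_sub_cancel_left]
            have hu2lim : Tendsto (fun h : ℝ => wtD w T 2 x (s+h)) (𝓝[>] (0:ℝ))
                (𝓝 (wtD w T 2 x s)) :=
              Filter.Tendsto.comp ((contT hw (by norm_num) hx') s hs1) hmap2
            have hfinal := hquotlim.mul
              ((tendsto_const_nhds.add hu2lim).neg
                : Tendsto (fun h : ℝ => -(wtD w T 2 x s + wtD w T 2 x (s+h)))
                  (𝓝[>] (0:ℝ)) (𝓝 (-(wtD w T 2 x s + wtD w T 2 x s))))
            rw [show (wtD w T 1 x s) * (-(2 * wtD w T 2 x s))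
              = (wtD w T 1 x s) * (-(wtD w T 2 x s + wtD w T 2 x s)) by ring]
            exact hfinal
      have c2 : (∫ s in (0:ℝ)..t, ψ s) = kk 0 - kk t := by
        have jointG : ContinuousOn (fun p : ℝ × ℝ =>
            wtD w T 1 p.1 p.2 * (-(2 * wtD w T 2 p.1 p.2))) (Icc (0:ℝ) 1 ×ˢ Icc 0 t) :=
          ((hw.2.2.2.1 1 (by norm_num)).mul
            ((continuousOn_const.mul (hw.2.2.2.1 2 (by norm_num))).neg)).mono
            (prod_mono_right (Icc_subset_Icc le_rfl (le_of_lt htT)))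
        simp only [hψ]
        rw [swapInt ht0 jointG]
        have hinner : ∀ x ∈ uIcc (0:ℝ) 1,
            (∫ s in (0:ℝ)..t, (wtD w T 1 x s) * (-(2 * wtD w T 2 x s)))
              = (wtD w T 1 x 0)^2 - (wtD w T 1 x t)^2 := by
          intro x hx
          rw [uIcc_of_le (by norm_num : (0:ℝ) ≤ 1)] at hx
          have hres := ftcIcc ht0 (f := fun s => -(wtD w T 1 x s)^2)
            (f' := fun s => (wtD w T 1 x s) * (-(2 * wtD w T 2 x s)))
            (((contT hw (by norm_num) hx).pow 2).neg.mono hIattoT)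
            (by
              intro s hs
              have hs1 := hIattoT hs
              have h1 := hasDeriv_t hT hw hx (by norm_num : 1 < 2) hs1
              have h2 : HasDerivWithinAt (fun s => -(wtD w T 1 x s)^2)
                  (-(((2:ℕ):ℝ) * wtD w T 1 x s ^ (2 - 1) * wtD w T (1 + 1) x s)) (Icc 0 t) s :=
                ((h1.pow 2).neg).mono hIattoT
              convert h2 using 1
              push_cast
              ring)
            (((contT hw (by norm_num) hx).mul
              ((continuousOn_const.mul (contT hw (by norm_num) hx)).neg)).mono hIattoT)
          rw [hres]; ring
        rw [intervalIntegral.integral_congr hinner,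
          intervalIntegral.integral_sub
            (f := fun x => (wtD w T 1 x 0)^2) (g := fun x => (wtD w T 1 x t)^2)
            (intInt01 ((contTx hw (by norm_num) ⟨le_rfl, le_of_lt hT⟩).pow 2))
            (intInt01 ((contTx hw (by norm_num) ht).pow 2))]
      rw [← c2]
      exact houter.congr' c_eq
    have := tendsto_nhds_unique claimB claimC
    linarith
  intro t ht
  have htot : ∀ s : ℝ, totE ζ w T s = 1/2 * kk s + 1/2 * g s := fun s => rfl
  rcases lt_or_eq_of_le ht.2 with hlt | heq
  · have := key t ht hlt
    rw [htot, htot]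
    linarith
  · subst heq
    have hne : (𝓝[Ico (0:ℝ) t] t).NeBot := by
      apply mem_closure_iff_nhdsWithin_neBot.mp
      rw [closure_Ico (ne_of_lt hT)]
      exact ⟨ht.1, le_rfl⟩
    have hlim1 : Tendsto (fun s => kk s + g s) (𝓝[Ico (0:ℝ) t] t) (𝓝 (kk t + g t)) :=
      ((hkkc.add hgc) t ht).mono_left (nhdsWithin_mono _ Ico_subset_Icc_self)
    have hlim2 : Tendsto (fun s => kk s + g s) (𝓝[Ico (0:ℝ) t] t) (𝓝 (kk 0 + g 0)) := by
      apply Tendsto.congr' _ (tendsto_const_nhds (α := ℝ))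
      filter_upwards [self_mem_nhdsWithin] with s hs
      exact (key s ⟨hs.1, le_of_lt hs.2⟩ hs.2).symm
    have h2 := tendsto_nhds_unique hlim1 hlim2
    rw [htot, htot]
    linarith

end BeamAux

/-- Two-sided energy bound for the double integral appearing in the multiplier
identity. -/
theorem stmt_18 (ζ T : ℝ) (hζ : 0 < ζ) (hT : 0 < T)
    (w : ℝ → ℝ → ℝ) (hw : IsBeamSolution ζ T w) :
    2 * totE ζ w T 0 * T
      ≤ (∫ t in (0:ℝ)..T, ∫ x in (0:ℝ)..1,
          ((wtD w T 1 x t)^2 + 3 * (wxD w 2 x t)^2 + 5 * ζ * (wxD w 3 x t)^2)) ∧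
    (∫ t in (0:ℝ)..T, ∫ x in (0:ℝ)..1,
        ((wtD w T 1 x t)^2 + 3 * (wxD w 2 x t)^2 + 5 * ζ * (wxD w 3 x t)^2))
      ≤ 10 * totE ζ w T 0 * T := by
  have hE := BeamAux.energy_const hζ hT hw
  have hFj : ContinuousOn (fun p : ℝ × ℝ =>
      (wtD w T 1 p.1 p.2)^2 + 3 * (wxD w 2 p.1 p.2)^2 + 5 * ζ * (wxD w 3 p.1 p.2)^2)
      (Icc (0:ℝ) 1 ×ˢ Icc (0:ℝ) T) :=
    (((hw.2.2.2.1 1 (by norm_num)).pow 2).add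
      (continuousOn_const.mul ((hw.2.2.1 2 (by norm_num)).pow 2))).add
      (continuousOn_const.mul ((hw.2.2.1 3 (by norm_num)).pow 2))
  have hIcont : ContinuousOn (fun t => ∫ x in (0:ℝ)..1,
      ((wtD w T 1 x t)^2 + 3 * (wxD w 2 x t)^2 + 5 * ζ * (wxD w 3 x t)^2))
      (Icc (0:ℝ) T) :=
    contParam (F := fun x t =>
      (wtD w T 1 x t)^2 + 3 * (wxD w 2 x t)^2 + 5 * ζ * (wxD w 3 x t)^2) hFj
  have hIint : IntervalIntegrable (fun t => ∫ x in (0:ℝ)..1,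
      ((wtD w T 1 x t)^2 + 3 * (wxD w 2 x t)^2 + 5 * ζ * (wxD w 3 x t)^2))
      volume 0 T := by
    apply ContinuousOn.intervalIntegrable
    rwa [uIcc_of_le (le_of_lt hT)]
  have hpt : ∀ t ∈ Icc (0:ℝ) T,
      2 * totE ζ w T 0 ≤ (∫ x in (0:ℝ)..1,
        ((wtD w T 1 x t)^2 + 3 * (wxD w 2 x t)^2 + 5 * ζ * (wxD w 3 x t)^2)) ∧
      (∫ x in (0:ℝ)..1,
        ((wtD w T 1 x t)^2 + 3 * (wxD w 2 x t)^2 + 5 * ζ * (wxD w 3 x t)^2))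
        ≤ 10 * totE ζ w T 0 := by
    intro t ht
    have cu := BeamAux.contTx hw (k := 1) (by norm_num) ht
    have c2 := BeamAux.contX hw (m := 2) (by norm_num) ht
    have c3 := BeamAux.contX hw (m := 3) (by norm_num) ht
    have iu := BeamAux.intInt01 (cu.pow 2)
    have i2 := BeamAux.intInt01 (c2.pow 2)
    have i3 := BeamAux.intInt01 (c3.pow 2)
    have e1 : (∫ x in (0:ℝ)..1,
        ((wtD w T 1 x t)^2 + 3 * (wxD w 2 x t)^2 + 5 * ζ * (wxD w 3 x t)^2))
        = (∫ x in (0:ℝ)..1, ((wtD w T 1 x t)^2 + 3 * (wxD w 2 x t)^2))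
          + ∫ x in (0:ℝ)..1, 5 * ζ * (wxD w 3 x t)^2 :=
      intervalIntegral.integral_add (iu.add (i2.const_mul 3)) (i3.const_mul (5 * ζ))
    have e2 : (∫ x in (0:ℝ)..1, ((wtD w T 1 x t)^2 + 3 * (wxD w 2 x t)^2))
        = (∫ x in (0:ℝ)..1, (wtD w T 1 x t)^2)
          + ∫ x in (0:ℝ)..1, 3 * (wxD w 2 x t)^2 :=
      intervalIntegral.integral_add iu (i2.const_mul 3)
    have e3 : (∫ x in (0:ℝ)..1, 3 * (wxD w 2 x t)^2)
        = 3 * ∫ x in (0:ℝ)..1, (wxD w 2 x t)^2 := intervalIntegral.integral_const_mul _ _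
    have e4 : (∫ x in (0:ℝ)..1, 5 * ζ * (wxD w 3 x t)^2)
        = (5 * ζ) * ∫ x in (0:ℝ)..1, (wxD w 3 x t)^2 := intervalIntegral.integral_const_mul _ _
    have e5 : (∫ x in (0:ℝ)..1, ((wxD w 2 x t)^2 + ζ * (wxD w 3 x t)^2))
        = (∫ x in (0:ℝ)..1, (wxD w 2 x t)^2)
          + ∫ x in (0:ℝ)..1, ζ * (wxD w 3 x t)^2 :=
      intervalIntegral.integral_add i2 (i3.const_mul ζ)
    have e6 : (∫ x in (0:ℝ)..1, ζ * (wxD w 3 x t)^2)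
        = ζ * ∫ x in (0:ℝ)..1, (wxD w 3 x t)^2 := intervalIntegral.integral_const_mul _ _
    have htot : 2 * totE ζ w T t
        = (∫ x in (0:ℝ)..1, (wtD w T 1 x t)^2)
          + ((∫ x in (0:ℝ)..1, (wxD w 2 x t)^2)
            + ζ * ∫ x in (0:ℝ)..1, (wxD w 3 x t)^2) := by
      unfold totE kinE strE
      rw [e5, e6]
      ring
    have hA0 : 0 ≤ ∫ x in (0:ℝ)..1, (wtD w T 1 x t)^2 :=
      intervalIntegral.integral_nonneg zero_le_one (fun x _ => sq_nonneg _)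
    have hC20 : 0 ≤ ∫ x in (0:ℝ)..1, (wxD w 2 x t)^2 :=
      intervalIntegral.integral_nonneg zero_le_one (fun x _ => sq_nonneg _)
    have hC30 : 0 ≤ ∫ x in (0:ℝ)..1, (wxD w 3 x t)^2 :=
      intervalIntegral.integral_nonneg zero_le_one (fun x _ => sq_nonneg _)
    have hz3 : 0 ≤ ζ * ∫ x in (0:ℝ)..1, (wxD w 3 x t)^2 := mul_nonneg hζ.le hC30
    have hEt : totE ζ w T 0 = totE ζ w T t := (hE t ht).symm
    constructor
    · rw [hEt]
      linarith [e1, e2, e3, e4, htot]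
    · rw [hEt]
      linarith [e1, e2, e3, e4, htot]
  have hconst : ∀ c : ℝ, (∫ _ in (0:ℝ)..T, c) = c * T := by
    intro c
    rw [intervalIntegral.integral_const, smul_eq_mul]
    ring
  constructor
  · have := intervalIntegral.integral_mono_on (le_of_lt hT)
      (_root_.intervalIntegrable_const (c := 2 * totE ζ w T 0)) hIint
      (fun t ht => (hpt t ht).1)
    rw [hconst] at this
    linarith
  · have := intervalIntegral.integral_mono_on (le_of_lt hT) hIint
      (_root_.intervalIntegrable_const (c := 10 * totE ζ w T 0))
      (fun t ht => (hpt t ht).2)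
    rw [hconst] at this
    linarith
end
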